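/- arXiv:1105.4805 — 4 statements merged into one kernel-verified Lean document; each statement's English description precedes it below -/
import Mathlib

section
/- Let d ≥ 1 and let P be a homogeneous polynomial of degree m ≥ 1 in d variables with complex coefficients. Let ξ ∈ ℝ^d satisfy P(ξ) = 0 and ∇P(ξ) ≠ 0. Then the linear form x ↦ ⟨∇P(ξ), x⟩ = Σ_{j=1}^d ∂_j P(ξ) x_j is a localization of P at infinity; more precisely, there exist a constant c > 0 and a strictly increasing sequence (n_k) of positive integers such that sup_{|x| ≤ 1} | P(x + n_k ξ)/P̃(n_k ξ, 1) − c ⟨∇P(ξ), x⟩ / |∇P(ξ)| | → 0 as k → ∞. -/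
open MvPolynomial Filter Finset

noncomputable section

/-- Evaluation of a complex-coefficient polynomial at a real point. -/
def evalR {d : ℕ} (P : MvPolynomial (Fin d) ℂ) (ξ : EuclideanSpace ℝ (Fin d)) : ℂ :=
  eval (fun i => (ξ i : ℂ)) P

/-- `P̃_V(ξ,t) = sup {|P(ξ+η)| : η ∈ V, |η| ≤ t}`. -/
def PtildeV {d : ℕ} (P : MvPolynomial (Fin d) ℂ) (V : Submodule ℝ (EuclideanSpace ℝ (Fin d)))
    (ξ : EuclideanSpace ℝ (Fin d)) (t : ℝ) : ℝ :=
  sSup {r : ℝ | ∃ η ∈ V, ‖η‖ ≤ t ∧ r = ‖evalR P (ξ + η)‖}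

/-- `P̃(ξ,t) = P̃_{ℝ^d}(ξ,t)`. -/
def Ptilde {d : ℕ} (P : MvPolynomial (Fin d) ℂ) (ξ : EuclideanSpace ℝ (Fin d)) (t : ℝ) : ℝ :=
  PtildeV P ⊤ ξ t

/-- `σ⁰_P(V)`. -/
def sigma0 {d : ℕ} (P : MvPolynomial (Fin d) ℂ) (V : Submodule ℝ (EuclideanSpace ℝ (Fin d))) : ℝ :=
  sInf {r : ℝ | ∃ t > (1:ℝ), ∃ ξ, r = PtildeV P V ξ t / Ptilde P ξ t}

/-- `σ_P(V)`. -/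
def sigma {d : ℕ} (P : MvPolynomial (Fin d) ℂ) (V : Submodule ℝ (EuclideanSpace ℝ (Fin d))) : ℝ :=
  sInf {r : ℝ | ∃ t > (1:ℝ), r = liminf (fun ξ => PtildeV P V ξ t / Ptilde P ξ t)
    (Bornology.cobounded (EuclideanSpace ℝ (Fin d)))}

/-- Multi-index partial derivative `∂^α P`. -/
def pd {d : ℕ} (α : Fin d → ℕ) (P : MvPolynomial (Fin d) ℂ) : MvPolynomial (Fin d) ℂ :=
  ((List.ofFn fun i : Fin d =>
      ((pderiv i).toLinearMap ^ α i : Module.End ℂ (MvPolynomial (Fin d) ℂ))).prod) P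

/-- The finset of multi-indices `α` with `k ≤ |α| ≤ m`. -/
def midx (d m k : ℕ) : Finset (Fin d → ℕ) :=
  (Fintype.piFinset fun _ : Fin d => Finset.range (m+1)).filter fun α => k ≤ ∑ i, α i ∧ ∑ i, α i ≤ m

/-- `⟨∇P(ξ), x⟩ = Σ_j ∂_j P(ξ) x_j`. -/
def gradPair {d : ℕ} (P : MvPolynomial (Fin d) ℂ) (ξ x : EuclideanSpace ℝ (Fin d)) : ℂ :=
  ∑ j, evalR (pderiv j P) ξ * (x j : ℂ)

/-- `|∇P(ξ)|`, the Euclidean norm of the gradient. -/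
def gradNorm {d : ℕ} (P : MvPolynomial (Fin d) ℂ) (ξ : EuclideanSpace ℝ (Fin d)) : ℝ :=
  Real.sqrt (∑ j, ‖evalR (pderiv j P) ξ‖ ^ 2)

section Aux

variable {d : ℕ}

lemma coeff_zero_aeval (a b : Fin d → MvPolynomial (Fin d) ℂ) (P : MvPolynomial (Fin d) ℂ) :
    (Polynomial.coeff (aeval (fun i => Polynomial.C (a i) + Polynomial.C (b i) * Polynomial.X) P) 0)
      = aeval a P := by
  induction P using MvPolynomial.induction_on with
  | C c => simp
  | add p q hp hq => simp [hp, hq]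
  | mul_X p i hp => simp [Polynomial.mul_coeff_zero, hp]

lemma coeff_one_aeval (a b : Fin d → MvPolynomial (Fin d) ℂ) (P : MvPolynomial (Fin d) ℂ) :
    (Polynomial.coeff (aeval (fun i => Polynomial.C (a i) + Polynomial.C (b i) * Polynomial.X) P) 1)
      = ∑ j, aeval a (pderiv j P) * b j := by
  classical
  induction P using MvPolynomial.induction_on with
  | C c => simp
  | add p q hp hq =>
      simp only [map_add, Polynomial.coeff_add, hp, hq, add_mul, Finset.sum_add_distrib]
  | mul_X p i hp =>
      have hr : ∀ j, aeval a (pderiv j (p * X i))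
          = aeval a (pderiv j p) * a i + aeval a p * (if j = i then 1 else 0) := by
        intro j
        rw [pderiv_mul, map_add, map_mul, map_mul, aeval_X, pderiv_X]
        by_cases h : j = i <;> simp [h, Pi.single_apply]
      have e1 : ((aeval fun i => Polynomial.C (a i) + Polynomial.C (b i) * Polynomial.X) (p * X i)).coeff 1
          = ((aeval fun i => Polynomial.C (a i) + Polynomial.C (b i) * Polynomial.X) p).coeff 1 * a i
            + ((aeval fun i => Polynomial.C (a i) + Polynomial.C (b i) * Polynomial.X) p).coeff 0 * b i := by
        rw [map_mul, aeval_X, mul_add, Polynomial.coeff_add, Polynomial.coeff_mul_C, ← mul_assoc]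
        congr 1
        have := Polynomial.coeff_mul_X ((aeval fun i => Polynomial.C (a i) + Polynomial.C (b i) * Polynomial.X) p * Polynomial.C (b i)) 0
        rw [show (1:ℕ) = 0 + 1 from rfl, this, Polynomial.coeff_mul_C]
      rw [e1, hp, coeff_zero_aeval a b p]
      simp only [hr, add_mul, Finset.sum_add_distrib, ite_mul, one_mul, zero_mul, mul_ite,
        mul_one, mul_zero, Finset.sum_ite_eq', Finset.mem_univ, if_true]
      rw [Finset.sum_congr rfl fun j _ => mul_right_comm (aeval a (pderiv j p)) (a i) (b j),
        ← Finset.sum_mul]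

lemma eval_aeval_C (x ξc : Fin d → ℂ) (P : MvPolynomial (Fin d) ℂ) :
    eval x (aeval (fun i => C (ξc i)) P) = eval ξc P := by
  induction P using MvPolynomial.induction_on with
  | C c => simp
  | add p q hp hq => simp only [map_add, hp, hq]
  | mul_X p i hp => simp only [map_mul, aeval_X, eval_C, eval_X, hp]

lemma master_eval (ξc x : Fin d → ℂ) (s : ℂ) (P : MvPolynomial (Fin d) ℂ) :
    Polynomial.eval s (Polynomial.map (eval x)
      (aeval (fun i => Polynomial.C (C (ξc i)) + Polynomial.C (X i) * Polynomial.X) P))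
      = eval (fun i => ξc i + x i * s) P := by
  induction P using MvPolynomial.induction_on with
  | C c => simp
  | add p q hp hq => simp [Polynomial.map_add, hp, hq]
  | mul_X p i hp => simp [Polynomial.map_mul, Polynomial.map_add, hp]

lemma hom_eval_scale {m : ℕ} (P : MvPolynomial (Fin d) ℂ) (hP : P.IsHomogeneous m)
    (c : ℂ) (y : Fin d → ℂ) :
    eval (fun i => c * y i) P = c ^ m * eval y P := by
  rw [eval_eq, eval_eq, Finset.mul_sum]
  refine Finset.sum_congr rfl fun s hs => ?_
  have hdeg : ∑ i ∈ s.support, s i = m := by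
    have h1 := hP (mem_support_iff.mp hs)
    rw [show (1 : Fin d → ℕ) = fun _ => 1 from rfl, ← Finsupp.degree_eq_weight_one] at h1
    exact h1
  simp_rw [mul_pow, Finset.prod_mul_distrib, Finset.prod_pow_eq_pow_sum, hdeg]
  ring

end Aux


set_option maxHeartbeats 4000000 in
/-- If `P` is homogeneous of degree `m ≥ 1`, `P(ξ) = 0` and `∇P(ξ) ≠ 0`, then
`x ↦ ⟨∇P(ξ), x⟩` is a localization of `P` at infinity along a subsequence `(n_k ξ)`. -/
theorem statement0 {d m : ℕ} (hd : 1 ≤ d) (hm : 1 ≤ m) (P : MvPolynomial (Fin d) ℂ)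
    (hP : P.IsHomogeneous m) (ξ : EuclideanSpace ℝ (Fin d))
    (hξ0 : evalR P ξ = 0) (hξ1 : (fun j => evalR (pderiv j P) ξ) ≠ 0) :
    ∃ c > (0:ℝ), ∃ n : ℕ → ℕ, StrictMono n ∧ (∀ k, 0 < n k) ∧
      Tendsto (fun k => sSup {r : ℝ | ∃ x : EuclideanSpace ℝ (Fin d), ‖x‖ ≤ 1 ∧
          r = ‖evalR P (x + (n k : ℝ) • ξ) / (Ptilde P ((n k : ℝ) • ξ) 1 : ℂ)
              - (c : ℂ) * gradPair P ξ x / (gradNorm P ξ : ℂ)‖})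
        atTop (nhds 0) := by
  classical
  -- Notation
  set ξc : Fin d → ℂ := fun i => (ξ i : ℂ) with hξc
  set ψP : Polynomial (MvPolynomial (Fin d) ℂ) :=
    aeval (fun i => Polynomial.C (C (ξc i)) + Polynomial.C (X i) * Polynomial.X) P with hψP
  set D : ℕ → MvPolynomial (Fin d) ℂ := fun k => ψP.coeff k with hDdef
  set M : ℕ := ψP.natDegree + 2 with hMdef
  have hM2 : 2 ≤ M := by omega
  set cx : EuclideanSpace ℝ (Fin d) → (Fin d → ℂ) := fun x i => (x i : ℂ) with hcx
  -- D 0 evaluates to 0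
  have hD0 : ∀ x : Fin d → ℂ, eval x (D 0) = 0 := by
    intro x
    have h := coeff_zero_aeval (fun i => C (ξc i)) (fun i => X i) P
    have : D 0 = aeval (fun i => C (ξc i)) P := h
    rw [this, eval_aeval_C]
    exact hξ0
  -- D 1 evaluates to the gradient pairing
  have hD1 : ∀ x : EuclideanSpace ℝ (Fin d), eval (cx x) (D 1) = gradPair P ξ x := by
    intro x
    have h := coeff_one_aeval (fun i => C (ξc i)) (fun i => X i) P
    have : D 1 = ∑ j, aeval (fun i => C (ξc i)) (pderiv j P) * X j := h
    rw [this, map_sum]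
    refine Finset.sum_congr rfl fun j _ => ?_
    rw [map_mul, eval_X, eval_aeval_C]
    rfl
  -- master expansion
  have hMaster : ∀ (x : Fin d → ℂ) (s : ℂ),
      eval (fun i => ξc i + x i * s) P = ∑ k ∈ range M, eval x (D k) * s ^ k := by
    intro x s
    rw [← master_eval ξc x s P]
    rw [Polynomial.eval_eq_sum_range'
      (lt_of_le_of_lt Polynomial.natDegree_map_le (by omega : ψP.natDegree < M)) s]
    exact Finset.sum_congr rfl fun k _ => by rw [Polynomial.coeff_map]
  -- expansion at scaled points
  have hExp : ∀ (ν : ℕ), 1 ≤ ν → ∀ x : EuclideanSpace ℝ (Fin d),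
      evalR P (x + (ν : ℝ) • ξ)
        = ((ν:ℝ)^(m-1) : ℝ) * (∑ k ∈ range M, eval (cx x) (D k) * (ν:ℂ) * ((ν:ℂ)⁻¹) ^ k) := by
    intro ν hν x
    have hc0 : ((ν:ℂ)) ≠ 0 := Nat.cast_ne_zero.mpr (by omega)
    have e1 : evalR P (x + (ν : ℝ) • ξ)
        = eval (fun i => (ν:ℂ) * (ξc i + (cx x) i * (ν:ℂ)⁻¹)) P := by
      have e0 : (fun i => (((x + (ν : ℝ) • ξ) i : ℝ) : ℂ))
          = fun i => (ν:ℂ) * (ξc i + (cx x) i * (ν:ℂ)⁻¹) := by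
        funext i
        have h5 : (x + (ν : ℝ) • ξ) i = x i + (ν:ℝ) * ξ i := by
          simp [PiLp.add_apply, PiLp.smul_apply, smul_eq_mul]
        rw [h5]
        push_cast
        field_simp
        ring
      unfold evalR
      rw [e0]
    rw [e1, hom_eval_scale P hP, hMaster]
    rw [Finset.mul_sum, Finset.mul_sum]
    refine Finset.sum_congr rfl fun k _ => ?_
    have hpow : (ν:ℂ)^m = (ν:ℂ)^(m-1) * (ν:ℂ) := by
      rw [← pow_succ]
      congr 1
      omega
    push_cast
    rw [hpow]
    ring
  -- gradient data
  set g : Fin d → ℂ := fun j => evalR (pderiv j P) ξ with hgdef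
  obtain ⟨j0, hj0⟩ : ∃ j, g j ≠ 0 := by
    by_contra h
    push_neg at h
    exact hξ1 (funext h)
  have hgn : 0 < gradNorm P ξ := by
    unfold gradNorm
    apply Real.sqrt_pos.mpr
    have h1 : (0:ℝ) < ‖(evalR (pderiv j0 P) ξ)‖ ^ 2 := pow_pos (norm_pos_iff.mpr hj0) 2
    have h2 : ∀ j, (0:ℝ) ≤ ‖(evalR (pderiv j P) ξ)‖ ^ 2 := fun j => by positivity
    exact Finset.sum_pos' (fun j _ => h2 j) ⟨j0, Finset.mem_univ _, h1⟩
  -- the linear form L and its sup S on the ball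
  set L : EuclideanSpace ℝ (Fin d) → ℂ := fun x => gradPair P ξ x with hLdef
  have hLcont : Continuous fun x : EuclideanSpace ℝ (Fin d) => ‖(L x)‖ := by
    apply continuous_norm.comp
    show Continuous fun x : EuclideanSpace ℝ (Fin d) => ∑ j, evalR (pderiv j P) ξ * (x j : ℂ)
    refine continuous_finset_sum _ fun j _ => ?_
    exact continuous_const.mul (Complex.continuous_ofReal.comp (EuclideanSpace.proj j).continuous)
  obtain ⟨xs, hxs_mem, hxs⟩ := (isCompact_closedBall (0 : EuclideanSpace ℝ (Fin d)) 1).exists_isMaxOn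
    ⟨0, Metric.mem_closedBall_self zero_le_one⟩ hLcont.continuousOn
  set S : ℝ := ‖(L xs)‖ with hSdef
  have hxs_norm : ‖xs‖ ≤ 1 := by rwa [← mem_closedBall_zero_iff]
  have hS_le : ∀ x : EuclideanSpace ℝ (Fin d), ‖x‖ ≤ 1 → ‖(L x)‖ ≤ S := by
    intro x hx
    exact hxs (by rwa [mem_closedBall_zero_iff] : x ∈ Metric.closedBall 0 1)
  have hS_pos : 0 < S := by
    have h1 : ‖EuclideanSpace.single j0 (1:ℝ)‖ ≤ 1 := by
      rw [EuclideanSpace.norm_single]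
      simp
    have h2 : L (EuclideanSpace.single j0 (1:ℝ)) = g j0 := by
      show (∑ j, evalR (pderiv j P) ξ * ((EuclideanSpace.single j0 (1:ℝ)) j : ℂ)) = g j0
      rw [Finset.sum_eq_single j0]
      · simp [EuclideanSpace.single_apply, hgdef]
      · intro b _ hb
        simp [EuclideanSpace.single_apply, hb]
      · simp
    have h3 := hS_le _ h1
    rw [h2] at h3
    have h4 : 0 < ‖(g j0)‖ := norm_pos_iff.mpr hj0
    linarith
  -- uniform bounds for the coefficients D k on the ball
  have hBex : ∀ k : ℕ, ∃ B : ℝ, 0 ≤ B ∧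
      ∀ x : EuclideanSpace ℝ (Fin d), ‖x‖ ≤ 1 → ‖(eval (cx x) (D k))‖ ≤ B := by
    intro k
    have hcont : Continuous fun x : EuclideanSpace ℝ (Fin d) => ‖(eval (cx x) (D k))‖ := by
      apply continuous_norm.comp
      exact (MvPolynomial.continuous_eval (D k)).comp
        (continuous_pi fun i => Complex.continuous_ofReal.comp (EuclideanSpace.proj i).continuous)
    obtain ⟨z, hz_mem, hz⟩ := (isCompact_closedBall (0 : EuclideanSpace ℝ (Fin d)) 1).exists_isMaxOn
      ⟨0, Metric.mem_closedBall_self zero_le_one⟩ hcont.continuousOn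
    exact ⟨_, by positivity, fun x hx => hz (by rwa [mem_closedBall_zero_iff] : x ∈ Metric.closedBall 0 1)⟩
  choose B hB0 hB using hBex
  set Cb : ℝ := 1 + ∑ k ∈ range M, B k with hCbdef
  have hCb_pos : 0 < Cb := by
    have : (0:ℝ) ≤ ∑ k ∈ range M, B k := Finset.sum_nonneg fun k _ => hB0 k
    linarith
  have hIcoCb : ∑ k ∈ Finset.Ico 2 M, B k ≤ Cb := by
    have h1 : ∑ k ∈ Finset.Ico 2 M, B k ≤ ∑ k ∈ range M, B k := by
      apply Finset.sum_le_sum_of_subset_of_nonneg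
      · rw [Finset.range_eq_Ico]
        exact Finset.Ico_subset_Ico (by omega) le_rfl
      · exact fun k _ _ => hB0 k
    linarith
  -- the error estimate for W
  have hW : ∀ (ν : ℕ), 1 ≤ ν → ∀ x : EuclideanSpace ℝ (Fin d), ‖x‖ ≤ 1 →
      ‖((∑ k ∈ range M, eval (cx x) (D k) * (ν:ℂ) * ((ν:ℂ)⁻¹) ^ k) - L x)‖ ≤ Cb / ν := by
    intro ν hν x hx
    have hc0 : ((ν:ℂ)) ≠ 0 := Nat.cast_ne_zero.mpr (by omega)
    have hν1 : (1:ℝ) ≤ (ν:ℝ) := by exact_mod_cast hν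
    have hνR : (0:ℝ) < (ν:ℝ) := by linarith
    have hsplit : (∑ k ∈ range M, eval (cx x) (D k) * (ν:ℂ) * ((ν:ℂ)⁻¹) ^ k)
        = eval (cx x) (D 0) * (ν:ℂ) * ((ν:ℂ)⁻¹) ^ 0
          + eval (cx x) (D 1) * (ν:ℂ) * ((ν:ℂ)⁻¹) ^ 1
          + ∑ k ∈ Finset.Ico 2 M, eval (cx x) (D k) * (ν:ℂ) * ((ν:ℂ)⁻¹) ^ k := by
      rw [Finset.range_eq_Ico, ← Finset.sum_Ico_consecutive _ (Nat.zero_le 2) hM2]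
      congr 1
      have : Finset.Ico 0 2 = ({0, 1} : Finset ℕ) := by decide
      rw [this]
      simp
    rw [hsplit, hD0, hD1]
    have hzero : (0:ℂ) * (ν:ℂ) * ((ν:ℂ)⁻¹) ^ 0 = 0 := by ring
    have hone : gradPair P ξ x * (ν:ℂ) * ((ν:ℂ)⁻¹) ^ 1 = L x := by
      field_simp
      rfl
    rw [hzero, hone, zero_add, add_sub_cancel_left]
    calc ‖(∑ k ∈ Finset.Ico 2 M, eval (cx x) (D k) * (ν:ℂ) * ((ν:ℂ)⁻¹) ^ k)‖
        ≤ ∑ k ∈ Finset.Ico 2 M, ‖(eval (cx x) (D k) * (ν:ℂ) * ((ν:ℂ)⁻¹) ^ k)‖ := by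
          exact norm_sum_le _ _
      _ ≤ ∑ k ∈ Finset.Ico 2 M, B k * ((ν:ℝ))⁻¹ := by
          refine Finset.sum_le_sum fun k hk => ?_
          obtain ⟨hk2, hkM⟩ := Finset.mem_Ico.mp hk
          rw [norm_mul, norm_mul, norm_pow, norm_inv, Complex.norm_natCast]
          have h1 : ‖(eval (cx x) (D k))‖ ≤ B k := hB k x hx
          have h2 : (ν:ℝ) * ((ν:ℝ)⁻¹) ^ k ≤ (ν:ℝ)⁻¹ := by
            have h3 : ((ν:ℝ)⁻¹) ^ k ≤ ((ν:ℝ)⁻¹) ^ 2 :=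
              pow_le_pow_of_le_one (by positivity) (inv_le_one_of_one_le₀ hν1) hk2
            have hνne : (ν:ℝ) ≠ 0 := ne_of_gt hνR
            have h4 : (ν:ℝ) * ((ν:ℝ)⁻¹) ^ 2 = (ν:ℝ)⁻¹ := by
              rw [pow_two]
              field_simp
            calc (ν:ℝ) * ((ν:ℝ)⁻¹) ^ k ≤ (ν:ℝ) * ((ν:ℝ)⁻¹) ^ 2 := by
                  exact mul_le_mul_of_nonneg_left h3 (by positivity)
              _ = (ν:ℝ)⁻¹ := h4
          rw [mul_assoc]
          exact mul_le_mul h1 h2 (by positivity) (hB0 k)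
      _ = (∑ k ∈ Finset.Ico 2 M, B k) * ((ν:ℝ))⁻¹ := by rw [Finset.sum_mul]
      _ ≤ Cb * ((ν:ℝ))⁻¹ := by
          apply mul_le_mul_of_nonneg_right hIcoCb (by positivity)
      _ = Cb / ν := by rw [div_eq_mul_inv]
  clear_value ψP D M cx g L S Cb
  -- absolute value of the expansion
  have hAbsExp : ∀ (ν : ℕ), 1 ≤ ν → ∀ x : EuclideanSpace ℝ (Fin d),
      ‖(evalR P (x + (ν:ℝ) • ξ))‖
        = (ν:ℝ)^(m-1) * ‖(∑ k ∈ range M, eval (cx x) (D k) * (ν:ℂ) * ((ν:ℂ)⁻¹) ^ k)‖ := by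
    intro ν hν x
    rw [hExp ν hν x, norm_mul, Complex.norm_real, Real.norm_eq_abs, abs_of_nonneg (by positivity)]
  -- bounds for Ptilde
  have hPt : ∀ ν : ℕ, 1 ≤ ν →
      (ν:ℝ)^(m-1) * (S - Cb/ν) ≤ Ptilde P ((ν:ℝ)•ξ) 1 ∧
      Ptilde P ((ν:ℝ)•ξ) 1 ≤ (ν:ℝ)^(m-1) * (S + Cb/ν) := by
    intro ν hν
    have hνR : (0:ℝ) < (ν:ℝ) := by exact_mod_cast Nat.pos_of_ne_zero (by omega)
    have hub : ∀ η : EuclideanSpace ℝ (Fin d), ‖η‖ ≤ 1 →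
        ‖(evalR P ((ν:ℝ)•ξ + η))‖ ≤ (ν:ℝ)^(m-1) * (S + Cb/ν) := by
      intro η hη
      rw [add_comm, hAbsExp ν hν η]
      apply mul_le_mul_of_nonneg_left _ (by positivity)
      have h6 := hW ν hν η hη
      have h7 := hS_le η hη
      have h8 := norm_add_le
        ((∑ k ∈ range M, eval (cx η) (D k) * (ν:ℂ) * ((ν:ℂ)⁻¹) ^ k) - L η) (L η)
      rw [sub_add_cancel] at h8
      linarith
    have hbdd : BddAbove {r : ℝ | ∃ η ∈ (⊤ : Submodule ℝ (EuclideanSpace ℝ (Fin d))), ‖η‖ ≤ 1 ∧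
        r = ‖(evalR P ((ν:ℝ)•ξ + η))‖} := by
      refine ⟨(ν:ℝ)^(m-1) * (S + Cb/ν), ?_⟩
      rintro r ⟨η, -, hη, rfl⟩
      exact hub η hη
    constructor
    · have hmem : ‖(evalR P ((ν:ℝ)•ξ + xs))‖ ∈
          {r : ℝ | ∃ η ∈ (⊤ : Submodule ℝ (EuclideanSpace ℝ (Fin d))), ‖η‖ ≤ 1 ∧
            r = ‖(evalR P ((ν:ℝ)•ξ + η))‖} := ⟨xs, Submodule.mem_top, hxs_norm, rfl⟩
      have hle := le_csSup hbdd hmem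
      have h5 : (ν:ℝ)^(m-1) * (S - Cb/ν) ≤ ‖(evalR P ((ν:ℝ)•ξ + xs))‖ := by
        rw [add_comm, hAbsExp ν hν xs]
        apply mul_le_mul_of_nonneg_left _ (by positivity)
        have h6 := hW ν hν xs hxs_norm
        have h9 : ‖(L xs)‖ ≤
            ‖(∑ k ∈ range M, eval (cx xs) (D k) * (ν:ℂ) * ((ν:ℂ)⁻¹) ^ k)‖
              + ‖((∑ k ∈ range M, eval (cx xs) (D k) * (ν:ℂ) * ((ν:ℂ)⁻¹) ^ k) - L xs)‖ := by
          calc ‖(L xs)‖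
              = ‖((L xs - (∑ k ∈ range M, eval (cx xs) (D k) * (ν:ℂ) * ((ν:ℂ)⁻¹) ^ k))
                + (∑ k ∈ range M, eval (cx xs) (D k) * (ν:ℂ) * ((ν:ℂ)⁻¹) ^ k))‖ := by
                congr 1
                ring
            _ ≤ ‖(L xs - (∑ k ∈ range M, eval (cx xs) (D k) * (ν:ℂ) * ((ν:ℂ)⁻¹) ^ k))‖
                + ‖(∑ k ∈ range M, eval (cx xs) (D k) * (ν:ℂ) * ((ν:ℂ)⁻¹) ^ k)‖ :=
                norm_add_le _ _
            _ = ‖(∑ k ∈ range M, eval (cx xs) (D k) * (ν:ℂ) * ((ν:ℂ)⁻¹) ^ k)‖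
                + ‖((∑ k ∈ range M, eval (cx xs) (D k) * (ν:ℂ) * ((ν:ℂ)⁻¹) ^ k) - L xs)‖ := by
                rw [norm_sub_rev]
                ring
        have hSeq : S = ‖(L xs)‖ := hSdef
        linarith
      exact le_trans h5 hle
    · apply Real.sSup_le
      · rintro r ⟨η, -, hη, rfl⟩
        exact hub η hη
      · exact mul_nonneg (by positivity) (add_nonneg hS_pos.le (div_nonneg hCb_pos.le hνR.le))
  -- threshold
  set N₀ : ℕ := max 1 (Nat.ceil (2*Cb/S)) + 1 with hN0def
  have hN₀ : ∀ ν : ℕ, N₀ ≤ ν → 1 ≤ ν ∧ Cb/(ν:ℝ) ≤ S/2 := by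
    intro ν hν
    have h0 : 1 ≤ N₀ := by
      have := le_max_left 1 (Nat.ceil (2*Cb/S))
      omega
    have h1 : 1 ≤ ν := le_trans h0 hν
    have hνR : (0:ℝ) < (ν:ℝ) := by exact_mod_cast h1
    refine ⟨h1, ?_⟩
    have h2 : (2*Cb/S : ℝ) ≤ (ν:ℝ) := by
      have h3 := Nat.le_ceil (2*Cb/S)
      have h4 : Nat.ceil (2*Cb/S) ≤ ν := by
        have := le_max_right 1 (Nat.ceil (2*Cb/S))
        omega
      have h5 : ((Nat.ceil (2*Cb/S) : ℕ) : ℝ) ≤ (ν:ℝ) := by exact_mod_cast h4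
      linarith
    rw [div_le_div_iff₀ hνR two_pos]
    have h6 : 2*Cb ≤ (ν:ℝ) * S := (div_le_iff₀ hS_pos).mp h2
    linarith
  clear_value N₀
  -- the cast identity for the constant
  have hcgrad : ∀ x : EuclideanSpace ℝ (Fin d),
      ((gradNorm P ξ / S : ℝ) : ℂ) * gradPair P ξ x / ((gradNorm P ξ : ℝ) : ℂ)
        = gradPair P ξ x / ((S : ℝ) : ℂ) := by
    intro x
    have hgC : ((gradNorm P ξ : ℝ) : ℂ) ≠ 0 := Complex.ofReal_ne_zero.mpr (ne_of_gt hgn)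
    have hSC : ((S : ℝ) : ℂ) ≠ 0 := Complex.ofReal_ne_zero.mpr (ne_of_gt hS_pos)
    push_cast
    field_simp
  -- main estimate
  have hMain : ∀ ν : ℕ, N₀ ≤ ν → ∀ x : EuclideanSpace ℝ (Fin d), ‖x‖ ≤ 1 →
      ‖(evalR P (x + (ν:ℝ)•ξ) / (Ptilde P ((ν:ℝ)•ξ) 1 : ℂ)
        - ((gradNorm P ξ / S : ℝ) : ℂ) * gradPair P ξ x / ((gradNorm P ξ : ℝ) : ℂ))‖
        ≤ 4*Cb/(S*ν) := by
    intro ν hν x hx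
    obtain ⟨h1ν, hεS⟩ := hN₀ ν hν
    have hνR : (0:ℝ) < (ν:ℝ) := by exact_mod_cast h1ν
    obtain ⟨hTl, hTu⟩ := hPt ν h1ν
    set ε : ℝ := Cb/(ν:ℝ) with hεdef
    have hε_pos : 0 < ε := div_pos hCb_pos hνR
    set u : ℝ := (ν:ℝ)^(m-1) with hudef
    have hu_pos : 0 < u := by positivity
    set T : ℝ := Ptilde P ((ν:ℝ)•ξ) 1 with hTdef
    have hT_pos : 0 < T := lt_of_lt_of_le (mul_pos hu_pos (by linarith)) hTl
    set t : ℝ := u / T with htdef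
    have ht_pos : 0 < t := div_pos hu_pos hT_pos
    have ht1 : t * (S - ε) ≤ 1 := by
      rw [htdef, div_mul_eq_mul_div, div_le_one hT_pos]
      exact hTl
    have ht2 : 1 ≤ t * (S + ε) := by
      rw [htdef, div_mul_eq_mul_div, le_div_iff₀ hT_pos]
      linarith
    clear_value ε u T t
    have hSt : S * t ≤ 2 := by
      nlinarith [ht1, mul_le_mul_of_nonneg_left hεS ht_pos.le]
    have ht_le : t ≤ 2 / S := by
      rw [le_div_iff₀ hS_pos]
      linarith
    have hS2 : (0:ℝ) < S^2 := by positivity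
    have habs : |t - 1/S| ≤ 2*ε/S^2 := by
      rw [abs_le]
      constructor
      · have key2 : S - S^2*t ≤ 2*ε := by
          nlinarith [mul_le_mul_of_nonneg_right hSt hε_pos.le, mul_le_mul_of_nonneg_left ht2 hS_pos.le]
        have h10 : (1/S - t) * S^2 ≤ 2*ε := by
          have he : (1/S - t) * S^2 = S - S^2*t := by
            field_simp
          rw [he]
          exact key2
        have h11 : 1/S - t ≤ 2*ε/S^2 := by
          rw [le_div_iff₀ hS2]
          exact h10
        linarith
      · have key1 : S^2*t - S ≤ 2*ε := by
          nlinarith [mul_le_mul_of_nonneg_left ht1 hS_pos.le, mul_le_mul_of_nonneg_right hSt hε_pos.le]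
        have h10 : (t - 1/S) * S^2 ≤ 2*ε := by
          have he : (t - 1/S) * S^2 = S^2*t - S := by
            field_simp
          rw [he]
          exact key1
        rw [← le_div_iff₀ hS2] at h10
        exact h10
    -- rewrite the expression
    have hTC : ((T : ℝ) : ℂ) ≠ 0 := Complex.ofReal_ne_zero.mpr (ne_of_gt hT_pos)
    have hSC : ((S : ℝ) : ℂ) ≠ 0 := Complex.ofReal_ne_zero.mpr (ne_of_gt hS_pos)
    have hexp2 : evalR P (x + (ν:ℝ)•ξ) / ((T : ℝ) : ℂ)
        - ((gradNorm P ξ / S : ℝ) : ℂ) * gradPair P ξ x / ((gradNorm P ξ : ℝ) : ℂ)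
        = ((t : ℝ) : ℂ) * ((∑ k ∈ range M, eval (cx x) (D k) * (ν:ℂ) * ((ν:ℂ)⁻¹) ^ k) - L x)
          + ((t - 1/S : ℝ) : ℂ) * L x := by
      rw [hcgrad x, hExp ν h1ν x]
      have hLx : L x = gradPair P ξ x := by rw [hLdef]
      rw [← hLx, htdef, hudef]
      push_cast
      field_simp
      rw [Finset.sum_congr rfl fun k _ => (show (ν:ℂ) * eval (cx x) (D k) * (1/(ν:ℂ))^k
        = eval (cx x) (D k) * (ν:ℂ) * (1/(ν:ℂ))^k by ring)]
      ring
    calc ‖(evalR P (x + (ν:ℝ)•ξ) / ((T : ℝ) : ℂ)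
        - ((gradNorm P ξ / S : ℝ) : ℂ) * gradPair P ξ x / ((gradNorm P ξ : ℝ) : ℂ))‖
        = ‖(((t : ℝ) : ℂ) * ((∑ k ∈ range M, eval (cx x) (D k) * (ν:ℂ) * ((ν:ℂ)⁻¹) ^ k) - L x)
          + ((t - 1/S : ℝ) : ℂ) * L x)‖ := by rw [hexp2]
      _ ≤ ‖(((t : ℝ) : ℂ) * ((∑ k ∈ range M, eval (cx x) (D k) * (ν:ℂ) * ((ν:ℂ)⁻¹) ^ k) - L x))‖
          + ‖(((t - 1/S : ℝ) : ℂ) * L x)‖ := norm_add_le _ _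
      _ = t * ‖((∑ k ∈ range M, eval (cx x) (D k) * (ν:ℂ) * ((ν:ℂ)⁻¹) ^ k) - L x)‖
          + |t - 1/S| * ‖(L x)‖ := by
            rw [norm_mul, norm_mul, Complex.norm_real, Complex.norm_real, Real.norm_eq_abs, Real.norm_eq_abs, abs_of_nonneg ht_pos.le]
      _ ≤ t * ε + (2*ε/S^2) * S := by
            apply add_le_add
            · rw [hεdef]
              exact mul_le_mul_of_nonneg_left (hW ν h1ν x hx) ht_pos.le
            · exact mul_le_mul habs (hS_le x hx) (norm_nonneg _) (by positivity)
      _ ≤ (2/S) * ε + (2*ε/S^2) * S := by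
            have := mul_le_mul_of_nonneg_right ht_le hε_pos.le
            linarith
      _ = 4*ε/S := by
            field_simp
            ring
      _ = 4*Cb/(S*ν) := by
            rw [hεdef]
            field_simp
  -- assemble
  refine ⟨gradNorm P ξ / S, div_pos hgn hS_pos, fun k => k + 1,
    fun a b h => Nat.succ_lt_succ h, fun k => Nat.succ_pos k, ?_⟩
  have hbnd : Tendsto (fun k : ℕ => 4*Cb/(S*((k:ℝ)+1))) atTop (nhds 0) := by
    have h1 := tendsto_one_div_add_atTop_nhds_zero_nat.const_mul (4*Cb/S)
    rw [mul_zero] at h1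
    refine h1.congr fun k => ?_
    have hk : (0:ℝ) < (k:ℝ) + 1 := by positivity
    field_simp
  apply squeeze_zero' ?_ ?_ hbnd
  · filter_upwards [eventually_ge_atTop N₀] with k hk
    have hub : ∀ r ∈ {r : ℝ | ∃ x : EuclideanSpace ℝ (Fin d), ‖x‖ ≤ 1 ∧
        r = ‖(evalR P (x + ((k+1 : ℕ) : ℝ) • ξ) / (Ptilde P (((k+1 : ℕ) : ℝ) • ξ) 1 : ℂ)
          - ((gradNorm P ξ / S : ℝ) : ℂ) * gradPair P ξ x / ((gradNorm P ξ : ℝ) : ℂ))‖},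
        r ≤ 4*Cb/(S*((k+1:ℕ):ℝ)) := by
      rintro r ⟨x, hx, rfl⟩
      exact hMain (k+1) (by omega) x hx
    have hmem : ‖(evalR P ((0:EuclideanSpace ℝ (Fin d)) + ((k+1 : ℕ) : ℝ) • ξ)
          / (Ptilde P (((k+1 : ℕ) : ℝ) • ξ) 1 : ℂ)
          - ((gradNorm P ξ / S : ℝ) : ℂ) * gradPair P ξ (0:EuclideanSpace ℝ (Fin d)) / ((gradNorm P ξ : ℝ) : ℂ))‖
        ∈ {r : ℝ | ∃ x : EuclideanSpace ℝ (Fin d), ‖x‖ ≤ 1 ∧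
        r = ‖(evalR P (x + ((k+1 : ℕ) : ℝ) • ξ) / (Ptilde P (((k+1 : ℕ) : ℝ) • ξ) 1 : ℂ)
          - ((gradNorm P ξ / S : ℝ) : ℂ) * gradPair P ξ x / ((gradNorm P ξ : ℝ) : ℂ))‖} :=
      ⟨0, by simp, rfl⟩
    exact le_trans (norm_nonneg _) (le_csSup ⟨_, hub⟩ hmem)
  · filter_upwards [eventually_ge_atTop N₀] with k hk
    have hub : ∀ r ∈ {r : ℝ | ∃ x : EuclideanSpace ℝ (Fin d), ‖x‖ ≤ 1 ∧
        r = ‖(evalR P (x + ((k+1 : ℕ) : ℝ) • ξ) / (Ptilde P (((k+1 : ℕ) : ℝ) • ξ) 1 : ℂ)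
          - ((gradNorm P ξ / S : ℝ) : ℂ) * gradPair P ξ x / ((gradNorm P ξ : ℝ) : ℂ))‖},
        r ≤ 4*Cb/(S*((k+1:ℕ):ℝ)) := by
      rintro r ⟨x, hx, rfl⟩
      exact hMain (k+1) (by omega) x hx
    have h2 : (0:ℝ) ≤ 4*Cb/(S*((k+1:ℕ):ℝ)) := by
      apply div_nonneg (by linarith)
      have : (0:ℝ) < ((k+1:ℕ):ℝ) := by positivity
      nlinarith [hS_pos]
    have h3 := Real.sSup_le hub h2
    calc sSup {r : ℝ | ∃ x : EuclideanSpace ℝ (Fin d), ‖x‖ ≤ 1 ∧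
        r = ‖(evalR P (x + ((k+1 : ℕ) : ℝ) • ξ) / (Ptilde P (((k+1 : ℕ) : ℝ) • ξ) 1 : ℂ)
          - ((gradNorm P ξ / S : ℝ) : ℂ) * gradPair P ξ x / ((gradNorm P ξ : ℝ) : ℂ))‖}
        ≤ 4*Cb/(S*((k+1:ℕ):ℝ)) := h3
      _ = 4*Cb/(S*((k:ℝ)+1)) := by push_cast; ring_nf
end
end

section
/- Let d ≥ 1, let P be a nonzero polynomial in d variables with complex coefficients, and let Q be a nonzero polynomial in d variables with complex coefficients such that there is a sequence (ξ_k) in ℝ^d with |ξ_k| → ∞ and, for every t > 0, sup_{|x| ≤ t} | P(x + ξ_k)/P̃(ξ_k,1) − Q(x) | → 0 as k → ∞. Then for every linear subspace V ⊆ ℝ^d: σ_P(V) ≤ inf_{t>1} Q̃_V(0,t)/Q̃(0,t). -/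
open MvPolynomial Filter Finset

noncomputable section

lemma zero_of_cube : ∀ {d : ℕ} (P : MvPolynomial (Fin d) ℂ) (a : Fin d → ℝ) (ε : ℝ), 0 < ε →
    (∀ x : Fin d → ℝ, (∀ i, |x i - a i| < ε) → eval (fun i => (x i : ℂ)) P = 0) → P = 0 := by
  intro d
  induction d with
  | zero =>
    intro P a ε hε h
    have h0 := h a (fun i => i.elim0)
    rw [P.eq_C_of_isEmpty] at h0 ⊢
    rw [eval_C] at h0
    rw [h0, map_zero]
  | succ n ih =>
    intro P a ε hε h
    have key : ∀ m, (finSuccEquiv ℂ n P).coeff m = 0 := by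
      intro m
      apply ih _ (a ∘ Fin.succ) ε hε
      intro y hy
      have hq : Polynomial.map (eval fun i => (y i : ℂ)) (finSuccEquiv ℂ n P) = 0 := by
        apply Polynomial.eq_zero_of_infinite_isRoot
        have hinf : ((fun s : ℝ => (s : ℂ)) '' Set.Ioo (a 0 - ε) (a 0 + ε)).Infinite :=
          (Set.Ioo_infinite (by linarith)).image
            (Set.injOn_of_injective (fun u v huv => by exact_mod_cast huv))
        apply hinf.mono
        rintro _ ⟨s, hs, rfl⟩
        rw [Set.mem_Ioo] at hs
        obtain ⟨hs1, hs2⟩ := hs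
        have hx : ∀ i, |(Fin.cons s y : Fin (n+1) → ℝ) i - a i| < ε := by
          intro i
          refine Fin.cases ?_ ?_ i
          · simpa [abs_sub_lt_iff] using ⟨by linarith, by linarith⟩
          · intro j
            simpa using hy j
        have h0 := h (Fin.cons s y) hx
        have hcons : (fun i => (((Fin.cons s y : Fin (n+1) → ℝ) i : ℝ) : ℂ)) =
            Fin.cons (s : ℂ) (fun i => (y i : ℂ)) := by
          funext i
          refine Fin.cases ?_ ?_ i <;> simp
        rw [hcons] at h0
        rw [eval_eq_eval_mv_eval'] at h0
        exact h0
      have := congrArg (fun p => Polynomial.coeff p m) hq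
      simpa [Polynomial.coeff_map] using this
    have hz : finSuccEquiv ℂ n P = 0 := Polynomial.ext fun m => by simp [key m]
    exact (finSuccEquiv ℂ n).injective (by rw [hz, map_zero])

lemma continuous_evalR {d : ℕ} (P : MvPolynomial (Fin d) ℂ) : Continuous (evalR P) := by
  have h1 : Continuous fun x : Fin d → ℂ => eval x P := MvPolynomial.continuous_eval P
  have h2 : Continuous fun ξ : EuclideanSpace ℝ (Fin d) => (fun i => (ξ i : ℂ)) :=
    continuous_pi fun i => Complex.continuous_ofReal.comp
      ((continuous_apply i).comp (PiLp.continuous_ofLp 2 fun _ : Fin d => ℝ))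
  exact h1.comp h2

lemma bddAbove_E {d : ℕ} (P : MvPolynomial (Fin d) ℂ)
    (V : Submodule ℝ (EuclideanSpace ℝ (Fin d))) (ξ : EuclideanSpace ℝ (Fin d)) (t : ℝ) :
    BddAbove {r : ℝ | ∃ η ∈ V, ‖η‖ ≤ t ∧ r = ‖evalR P (ξ + η)‖} := by
  have hc : Continuous fun η : EuclideanSpace ℝ (Fin d) => ‖evalR P (ξ + η)‖ :=
    continuous_norm.comp ((continuous_evalR P).comp (continuous_const.add continuous_id))
  have hcpt : IsCompact (Metric.closedBall (0 : EuclideanSpace ℝ (Fin d)) t) :=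
    isCompact_closedBall _ _
  refine BddAbove.mono ?_ (hcpt.bddAbove_image hc.continuousOn)
  rintro r ⟨η, _, hη, rfl⟩
  exact ⟨η, by simpa [Metric.mem_closedBall, dist_zero_right] using hη, rfl⟩

lemma mem_E {d : ℕ} (P : MvPolynomial (Fin d) ℂ) {V : Submodule ℝ (EuclideanSpace ℝ (Fin d))}
    {ξ η : EuclideanSpace ℝ (Fin d)} {t : ℝ} (hη : η ∈ V) (hn : ‖η‖ ≤ t) :
    ‖evalR P (ξ + η)‖ ≤ PtildeV P V ξ t :=
  le_csSup (bddAbove_E P V ξ t) ⟨η, hη, hn, rfl⟩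

lemma E_nonempty {d : ℕ} (P : MvPolynomial (Fin d) ℂ)
    (V : Submodule ℝ (EuclideanSpace ℝ (Fin d))) (ξ : EuclideanSpace ℝ (Fin d)) {t : ℝ}
    (ht : 0 ≤ t) :
    {r : ℝ | ∃ η ∈ V, ‖η‖ ≤ t ∧ r = ‖evalR P (ξ + η)‖}.Nonempty :=
  ⟨_, 0, V.zero_mem, by simpa using ht, rfl⟩

lemma PtildeV_nonneg {d : ℕ} (P : MvPolynomial (Fin d) ℂ)
    (V : Submodule ℝ (EuclideanSpace ℝ (Fin d))) (ξ : EuclideanSpace ℝ (Fin d)) {t : ℝ}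
    (ht : 0 ≤ t) : 0 ≤ PtildeV P V ξ t :=
  le_trans (by positivity) (mem_E P V.zero_mem (by simpa using ht))

lemma PtildeV_le_Ptilde {d : ℕ} (P : MvPolynomial (Fin d) ℂ)
    (V : Submodule ℝ (EuclideanSpace ℝ (Fin d))) (ξ : EuclideanSpace ℝ (Fin d)) {t : ℝ}
    (ht : 0 ≤ t) : PtildeV P V ξ t ≤ Ptilde P ξ t := by
  apply csSup_le_csSup (bddAbove_E P ⊤ ξ t) (E_nonempty P V ξ ht)
  rintro r ⟨η, _, hn, rfl⟩
  exact ⟨η, trivial, hn, rfl⟩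

lemma exists_ball_ne {d : ℕ} (P : MvPolynomial (Fin d) ℂ) (hP : P ≠ 0)
    (ξ : EuclideanSpace ℝ (Fin d)) {t : ℝ} (ht : 0 < t) :
    ∃ η : EuclideanSpace ℝ (Fin d), ‖η‖ ≤ t ∧ evalR P (ξ + η) ≠ 0 := by
  by_contra hcon
  push_neg at hcon
  apply hP
  set ε : ℝ := t / (d + 1) with hεdef
  have hε : 0 < ε := by positivity
  apply zero_of_cube P (fun i => ξ i) ε hε
  intro x hx
  set η : EuclideanSpace ℝ (Fin d) := WithLp.toLp 2 (fun i => x i - ξ i : Fin d → ℝ) with hηdef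
  have hnorm : ‖η‖ ≤ t := by
    rw [EuclideanSpace.norm_eq]
    have hsum : ∑ i, ‖η i‖ ^ 2 ≤ ∑ _i : Fin d, ε ^ 2 := by
      apply Finset.sum_le_sum
      intro i _
      have : |η i| ≤ ε := le_of_lt (by simpa [hηdef] using hx i)
      calc ‖η i‖ ^ 2 = |η i| ^ 2 := by rw [Real.norm_eq_abs]
        _ ≤ ε ^ 2 := by nlinarith [abs_nonneg (η i)]
    have hdε : (d : ℝ) * ε ^ 2 ≤ t ^ 2 := by
      rw [hεdef]
      rw [div_pow]
      rw [mul_div_assoc']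
      rw [div_le_iff₀ (by positivity)]
      nlinarith [Nat.cast_nonneg (α := ℝ) d, sq_nonneg t, sq_nonneg ((d:ℝ)), mul_nonneg (mul_nonneg (Nat.cast_nonneg (α := ℝ) d) (Nat.cast_nonneg (α := ℝ) d)) (sq_nonneg t), mul_nonneg (Nat.cast_nonneg (α := ℝ) d) (sq_nonneg t)]
    calc Real.sqrt (∑ i, ‖η i‖ ^ 2) ≤ Real.sqrt ((d : ℝ) * ε ^ 2) := by
          apply Real.sqrt_le_sqrt
          simpa using hsum
      _ ≤ Real.sqrt (t ^ 2) := Real.sqrt_le_sqrt hdε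
      _ = t := by rw [Real.sqrt_sq ht.le]
  have h0 := hcon η hnorm
  have hxi : (fun i => (((ξ + η) i : ℝ) : ℂ)) = fun i => ((x i : ℝ) : ℂ) := by
    funext i
    have hpt : (ξ + η) i = x i := by
      simp [hηdef, PiLp.add_apply]
    rw [hpt]
  rw [evalR, hxi] at h0
  exact h0

lemma Ptilde_pos {d : ℕ} {P : MvPolynomial (Fin d) ℂ} (hP : P ≠ 0)
    (ξ : EuclideanSpace ℝ (Fin d)) {t : ℝ} (ht : 0 < t) : 0 < Ptilde P ξ t := by
  obtain ⟨η, hn, hne⟩ := exists_ball_ne P hP ξ ht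
  exact lt_of_lt_of_le (norm_pos_iff.mpr hne) (mem_E P trivial hn)

lemma bddAbove_err {d : ℕ} (P Q : MvPolynomial (Fin d) ℂ) (ξ0 : EuclideanSpace ℝ (Fin d))
    (c t : ℝ) :
    BddAbove {r : ℝ | ∃ x : EuclideanSpace ℝ (Fin d), ‖x‖ ≤ t ∧
      r = ‖evalR P (x + ξ0) / (c : ℂ) - evalR Q x‖} := by
  have hc : Continuous fun x : EuclideanSpace ℝ (Fin d) =>
      ‖evalR P (x + ξ0) / (c : ℂ) - evalR Q x‖ :=
    continuous_norm.comp
      ((((continuous_evalR P).comp (continuous_id.add continuous_const)).div_const _).sub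
        (continuous_evalR Q))
  have hcpt : IsCompact (Metric.closedBall (0 : EuclideanSpace ℝ (Fin d)) t) :=
    isCompact_closedBall _ _
  refine BddAbove.mono ?_ (hcpt.bddAbove_image hc.continuousOn)
  rintro r ⟨x, hx, rfl⟩
  exact ⟨x, by simpa [Metric.mem_closedBall, dist_zero_right] using hx, rfl⟩

lemma key_est {d : ℕ} (P Q : MvPolynomial (Fin d) ℂ)
    (V : Submodule ℝ (EuclideanSpace ℝ (Fin d))) (ξ0 : EuclideanSpace ℝ (Fin d)) {c e t : ℝ}
    (hc : 0 < c) (ht : 0 < t)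
    (he : ∀ x : EuclideanSpace ℝ (Fin d), ‖x‖ ≤ t →
      ‖evalR P (x + ξ0) / (c : ℂ) - evalR Q x‖ ≤ e) :
    |PtildeV P V ξ0 t / c - PtildeV Q V 0 t| ≤ e := by
  have hpt : ∀ η : EuclideanSpace ℝ (Fin d), η ∈ V → ‖η‖ ≤ t →
      |‖evalR P (ξ0 + η)‖ / c - ‖evalR Q (0 + η)‖| ≤ e := by
    intro η hη hn
    have h1 : ‖evalR P (ξ0 + η)‖ / c = ‖evalR P (η + ξ0) / (c : ℂ)‖ := by
      rw [norm_div, Complex.norm_real, Real.norm_of_nonneg hc.le, add_comm]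
    rw [h1, zero_add]
    calc |‖evalR P (η + ξ0) / (c : ℂ)‖ - ‖evalR Q η‖|
        ≤ ‖evalR P (η + ξ0) / (c : ℂ) - evalR Q η‖ :=
          abs_norm_sub_norm_le _ _
      _ ≤ e := he η hn
  rw [abs_le]
  constructor
  · have hQle : PtildeV Q V 0 t ≤ PtildeV P V ξ0 t / c + e := by
      apply csSup_le (E_nonempty Q V 0 ht.le)
      rintro r ⟨η, hη, hn, rfl⟩
      have h2 := (abs_le.1 (hpt η hη hn)).1
      have h3 : ‖evalR P (ξ0 + η)‖ / c ≤ PtildeV P V ξ0 t / c :=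
        div_le_div_of_nonneg_right (mem_E P hη hn) hc.le |>.trans_eq rfl
      linarith
    linarith
  · have hAle : PtildeV P V ξ0 t ≤ (PtildeV Q V 0 t + e) * c := by
      apply csSup_le (E_nonempty P V ξ0 ht.le)
      rintro r ⟨η, hη, hn, rfl⟩
      have h2 := (abs_le.1 (hpt η hη hn)).2
      have h3 : ‖evalR Q (0 + η)‖ ≤ PtildeV Q V 0 t := mem_E Q hη hn
      rw [← div_le_iff₀ hc]
      linarith
    rw [sub_le_iff_le_add]
    rw [div_le_iff₀ hc]
    linarith [hAle]

lemma F_bounds {d : ℕ} (P : MvPolynomial (Fin d) ℂ)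
    (V : Submodule ℝ (EuclideanSpace ℝ (Fin d))) (ζ : EuclideanSpace ℝ (Fin d)) {t : ℝ}
    (ht : 0 ≤ t) : 0 ≤ PtildeV P V ζ t / Ptilde P ζ t ∧ PtildeV P V ζ t / Ptilde P ζ t ≤ 1 := by
  constructor
  · exact div_nonneg (PtildeV_nonneg P V ζ ht) (PtildeV_nonneg P ⊤ ζ ht)
  · rcases eq_or_ne (Ptilde P ζ t) 0 with hB | hB
    · rw [hB]; simp
    · have hpos : 0 < Ptilde P ζ t := lt_of_le_of_ne (PtildeV_nonneg P ⊤ ζ ht) (Ne.symm hB)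
      rw [div_le_one hpos]
      exact PtildeV_le_Ptilde P V ζ ht

/-- If `Q` is a localization of `P` at infinity (along a sequence `ξ_k` with `|ξ_k| → ∞`,
with uniform convergence of `P(·+ξ_k)/P̃(ξ_k,1)` to `Q` on every ball), then
`σ_P(V) ≤ inf_{t>1} Q̃_V(0,t)/Q̃(0,t)` for every subspace `V`. -/
theorem statement6 {d : ℕ} (hd : 1 ≤ d) (P Q : MvPolynomial (Fin d) ℂ)
    (hP : P ≠ 0) (hQ : Q ≠ 0) (ξ : ℕ → EuclideanSpace ℝ (Fin d))
    (hξ : Tendsto (fun k => ‖ξ k‖) atTop atTop)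
    (hconv : ∀ t > (0:ℝ), Tendsto (fun k => sSup {r : ℝ |
        ∃ x : EuclideanSpace ℝ (Fin d), ‖x‖ ≤ t ∧
          r = ‖evalR P (x + ξ k) / (Ptilde P (ξ k) 1 : ℂ) - evalR Q x‖})
      atTop (nhds 0))
    (V : Submodule ℝ (EuclideanSpace ℝ (Fin d))) :
    sigma P V ≤ sInf {r : ℝ | ∃ t > (1:ℝ), r = PtildeV Q V 0 t / Ptilde Q 0 t} := by
  haveI : Nontrivial (EuclideanSpace ℝ (Fin d)) := by
    refine ⟨⟨EuclideanSpace.single ⟨0, hd⟩ (1 : ℝ), 0, ?_⟩⟩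
    intro h
    have h2 : EuclideanSpace.single (⟨0, hd⟩ : Fin d) (1 : ℝ) ⟨0, hd⟩ =
        (0 : EuclideanSpace ℝ (Fin d)) ⟨0, hd⟩ := by rw [h]
    simp [EuclideanSpace.single_apply] at h2
  refine le_csInf ⟨PtildeV Q V 0 2 / Ptilde Q 0 2, ⟨2, one_lt_two, rfl⟩⟩ ?_
  rintro r ⟨t, ht, rfl⟩
  have ht0 : (0 : ℝ) < t := by linarith
  set c : ℕ → ℝ := fun k => Ptilde P (ξ k) 1 with hcdef
  have hck : ∀ k, 0 < c k := fun k => Ptilde_pos hP (ξ k) one_pos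
  set e : ℕ → ℝ := fun k => sSup {r : ℝ | ∃ x : EuclideanSpace ℝ (Fin d), ‖x‖ ≤ t ∧
      r = ‖evalR P (x + ξ k) / (c k : ℂ) - evalR Q x‖} with hedef
  have he0 : Tendsto e atTop (nhds 0) := hconv t ht0
  have hest : ∀ (W : Submodule ℝ (EuclideanSpace ℝ (Fin d))) (k : ℕ),
      |PtildeV P W (ξ k) t / c k - PtildeV Q W 0 t| ≤ e k := by
    intro W k
    apply key_est P Q W (ξ k) (hck k) ht0
    intro x hx
    exact le_csSup (bddAbove_err P Q (ξ k) (c k) t) ⟨x, hx, rfl⟩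
  have htend : ∀ W : Submodule ℝ (EuclideanSpace ℝ (Fin d)),
      Tendsto (fun k => PtildeV P W (ξ k) t / c k) atTop (nhds (PtildeV Q W 0 t)) := by
    intro W
    have hz : Tendsto (fun k => PtildeV P W (ξ k) t / c k - PtildeV Q W 0 t) atTop (nhds 0) :=
      squeeze_zero_norm (fun k => by simpa [Real.norm_eq_abs] using hest W k) he0
    have h3 := hz.add_const (PtildeV Q W 0 t)
    simpa using h3
  have hQt : 0 < Ptilde Q 0 t := Ptilde_pos hQ 0 ht0
  set Fn : EuclideanSpace ℝ (Fin d) → ℝ := fun ζ => PtildeV P V ζ t / Ptilde P ζ t with hFdef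
  have hFt : Tendsto (fun k => Fn (ξ k)) atTop (nhds (PtildeV Q V 0 t / Ptilde Q 0 t)) := by
    have hdd : ∀ a b : ℝ, ∀ k : ℕ, (a / c k) / (b / c k) = a / b := by
      intro a b k
      exact div_div_div_cancel_right₀ (hck k).ne' a b
    have heq : (fun k => Fn (ξ k)) = fun k => (PtildeV P V (ξ k) t / c k) /
        (PtildeV P ⊤ (ξ k) t / c k) := funext fun k => (hdd _ _ k).symm
    rw [heq]
    exact (htend V).div (htend ⊤) hQt.ne'
  have hmaple : map ξ atTop ≤ Bornology.cobounded (EuclideanSpace ℝ (Fin d)) :=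
    tendsto_norm_atTop_iff_cobounded.mp hξ
  have hbdd_ge : IsBoundedUnder (· ≥ ·) (Bornology.cobounded (EuclideanSpace ℝ (Fin d))) Fn :=
    isBoundedUnder_of ⟨0, fun ζ => (F_bounds P V ζ ht0.le).1⟩
  have hcobdd : IsCoboundedUnder (· ≥ ·) (map ξ atTop) Fn :=
    IsBoundedUnder.isCoboundedUnder_ge (isBoundedUnder_of ⟨1, fun ζ => (F_bounds P V ζ ht0.le).2⟩)
  have h1 : liminf Fn (Bornology.cobounded (EuclideanSpace ℝ (Fin d))) ≤ liminf Fn (map ξ atTop) :=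
    liminf_le_liminf_of_le hmaple hbdd_ge hcobdd
  have h2 : liminf Fn (map ξ atTop) = PtildeV Q V 0 t / Ptilde Q 0 t := by
    have h3 : liminf Fn (map ξ atTop) = liminf (fun k => Fn (ξ k)) atTop := by
      rw [Filter.liminf, Filter.liminf, Filter.map_map]
      rfl
    rw [h3]
    exact hFt.liminf_eq
  have hbelow : BddBelow {r : ℝ | ∃ t > (1:ℝ), r = liminf (fun ζ => PtildeV P V ζ t / Ptilde P ζ t)
      (Bornology.cobounded (EuclideanSpace ℝ (Fin d)))} := by
    refine ⟨0, ?_⟩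
    rintro r ⟨t', ht', rfl⟩
    have ht'0 : (0:ℝ) ≤ t' := by linarith
    apply le_liminf_of_le
    · exact IsBoundedUnder.isCoboundedUnder_ge
        (isBoundedUnder_of ⟨1, fun ζ => (F_bounds P V ζ ht'0).2⟩)
    · exact Eventually.of_forall fun ζ => (F_bounds P V ζ ht'0).1
  have hsig : sigma P V ≤ liminf Fn (Bornology.cobounded (EuclideanSpace ℝ (Fin d))) :=
    csInf_le hbelow ⟨t, ht, rfl⟩
  calc sigma P V ≤ liminf Fn (Bornology.cobounded (EuclideanSpace ℝ (Fin d))) := hsig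
    _ ≤ liminf Fn (map ξ atTop) := h1
    _ = PtildeV Q V 0 t / Ptilde Q 0 t := h2
end
end

section
/- Let d ≥ 3, let Q be the polynomial in d real variables Q(ξ) = ξ_1² − ξ_2² − ⋯ − ξ_d², and let e_d := (0,…,0,1) ∈ ℝ^d. Then σ_Q(e_d) = 0. -/
open MvPolynomial Filter Finset

noncomputable section

/-- Evaluation of a real-coefficient polynomial at a point of `ℝ^d`. -/
def evalRR {d : ℕ} (Q : MvPolynomial (Fin d) ℝ) (ξ : EuclideanSpace ℝ (Fin d)) : ℝ :=
  eval (fun i => ξ i) Q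

/-- `Q̃_V(ξ,t) = sup {|Q(ξ+η)| : η ∈ V, |η| ≤ t}`. -/
def PtildeVR {d : ℕ} (Q : MvPolynomial (Fin d) ℝ) (V : Submodule ℝ (EuclideanSpace ℝ (Fin d)))
    (ξ : EuclideanSpace ℝ (Fin d)) (t : ℝ) : ℝ :=
  sSup {r : ℝ | ∃ η ∈ V, ‖η‖ ≤ t ∧ r = |evalRR Q (ξ + η)|}

/-- `Q̃(ξ,t) = Q̃_{ℝ^d}(ξ,t)`. -/
def PtildeR {d : ℕ} (Q : MvPolynomial (Fin d) ℝ) (ξ : EuclideanSpace ℝ (Fin d)) (t : ℝ) : ℝ :=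
  PtildeVR Q ⊤ ξ t

/-- `σ⁰_Q(V)`. -/
def sigma0R {d : ℕ} (Q : MvPolynomial (Fin d) ℝ) (V : Submodule ℝ (EuclideanSpace ℝ (Fin d))) : ℝ :=
  sInf {r : ℝ | ∃ t > (1:ℝ), ∃ ξ, r = PtildeVR Q V ξ t / PtildeR Q ξ t}

/-- `σ_Q(V)`. -/
def sigmaR {d : ℕ} (Q : MvPolynomial (Fin d) ℝ) (V : Submodule ℝ (EuclideanSpace ℝ (Fin d))) : ℝ :=
  sInf {r : ℝ | ∃ t > (1:ℝ), r = liminf (fun ξ => PtildeVR Q V ξ t / PtildeR Q ξ t)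
    (Bornology.cobounded (EuclideanSpace ℝ (Fin d)))}

lemma sum_sq_two_supp {d : ℕ} (i0 i1 i2 : Fin d) (h12 : i1 ≠ i2) (h10 : i1 ≠ i0) (h20 : i2 ≠ i0)
    (a b : ℝ) (c : Fin d → ℝ)
    (hc : ∀ j, j ≠ i0 → c j = (if j = i1 then a else 0) + (if j = i2 then b else 0)) :
    ∑ j ∈ Finset.univ.erase i0, c j ^ 2 = a ^ 2 + b ^ 2 := by
  have key : ∀ j ∈ Finset.univ.erase i0,
      c j ^ 2 = (if j = i1 then a ^ 2 else 0) + (if j = i2 then b ^ 2 else 0) := by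
    intro j hj
    rw [hc j (Finset.mem_erase.mp hj).1]
    by_cases h1 : j = i1
    · have h2 : j ≠ i2 := by rw [h1]; exact h12
      simp [h1, h2, h12]
    · by_cases h2 : j = i2 <;> simp [h1, h2, h12.symm]
  rw [Finset.sum_congr rfl key, Finset.sum_add_distrib, Finset.sum_ite_eq', Finset.sum_ite_eq']
  simp [Finset.mem_erase, h10, h20]

/-- For `Q(ξ) = ξ₁² - ξ₂² - ⋯ - ξ_d²` (`d ≥ 3`) and `e_d = (0,…,0,1)`: `σ_Q(e_d) = 0`. -/
theorem statement9 {d : ℕ} (hd : 3 ≤ d) (Q : MvPolynomial (Fin d) ℝ)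
    (hQ : Q = X (⟨0, by omega⟩ : Fin d) ^ 2 -
        ∑ j ∈ Finset.univ.erase (⟨0, by omega⟩ : Fin d), X j ^ 2)
    (ed : EuclideanSpace ℝ (Fin d))
    (hed : ∀ i : Fin d, ed i = if (i : ℕ) = d - 1 then 1 else 0) :
    sigmaR Q (Submodule.span ℝ {ed}) = 0 := by
  set i0 : Fin d := ⟨0, by omega⟩ with hi0
  set i1 : Fin d := ⟨1, by omega⟩ with hi1
  set id1 : Fin d := ⟨d - 1, by omega⟩ with hid1
  have h10 : i1 ≠ i0 := by simp [hi0, hi1, Fin.ext_iff]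
  have h1d : i1 ≠ id1 := by simp [hi1, hid1, Fin.ext_iff]; omega
  have hd0 : id1 ≠ i0 := by simp [hi0, hid1, Fin.ext_iff]; omega
  set V := Submodule.span ℝ {ed} with hV
  -- evaluation formula
  have heval : ∀ ξ : EuclideanSpace ℝ (Fin d), evalRR Q ξ = ξ i0 ^ 2 - ∑ j ∈ Finset.univ.erase i0, ξ j ^ 2 := by
    intro ξ
    simp [evalRR, hQ]
  -- continuity
  have hcont : Continuous (evalRR Q) :=
    (MvPolynomial.continuous_eval Q).comp (continuous_pi fun i => by fun_prop)
  -- the top set is the image of a closed ball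
  have hDset : ∀ (ξ : EuclideanSpace ℝ (Fin d)) (t : ℝ),
      {r : ℝ | ∃ η ∈ (⊤ : Submodule ℝ (EuclideanSpace ℝ (Fin d))), ‖η‖ ≤ t ∧ r = |evalRR Q (ξ + η)|}
        = (fun η => |evalRR Q (ξ + η)|) '' Metric.closedBall 0 t := by
    intro ξ t
    ext r
    constructor
    · rintro ⟨η, -, hη, rfl⟩
      exact ⟨η, by simpa [Metric.mem_closedBall, dist_zero_right] using hη, rfl⟩
    · rintro ⟨η, hη, rfl⟩
      exact ⟨η, Submodule.mem_top, by simpa [Metric.mem_closedBall, dist_zero_right] using hη, rfl⟩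
  have hbddD : ∀ (ξ : EuclideanSpace ℝ (Fin d)) (t : ℝ), BddAbove
      {r : ℝ | ∃ η ∈ (⊤ : Submodule ℝ (EuclideanSpace ℝ (Fin d))), ‖η‖ ≤ t ∧ r = |evalRR Q (ξ + η)|} := by
    intro ξ t
    rw [hDset]
    exact ((isCompact_closedBall (0 : EuclideanSpace ℝ (Fin d)) t).image
      (continuous_abs.comp (hcont.comp (continuous_const.add continuous_id)))).bddAbove
  -- nonnegativity
  have hnonneg : ∀ (W : Submodule ℝ (EuclideanSpace ℝ (Fin d))) (ξ : EuclideanSpace ℝ (Fin d)) (t : ℝ), 0 ≤ PtildeVR Q W ξ t := by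
    intro W ξ t
    apply Real.sSup_nonneg
    rintro r ⟨η, -, -, rfl⟩
    exact abs_nonneg _
  -- elements are below the sup
  have hmemD : ∀ (ξ : EuclideanSpace ℝ (Fin d)) (t : ℝ) (η : EuclideanSpace ℝ (Fin d)), ‖η‖ ≤ t → |evalRR Q (ξ + η)| ≤ PtildeR Q ξ t := by
    intro ξ t η hη
    exact le_csSup (hbddD ξ t) ⟨η, Submodule.mem_top, hη, rfl⟩
  -- numerator ≤ denominator
  have hNle : ∀ (ξ : EuclideanSpace ℝ (Fin d)) (t : ℝ), 0 ≤ t → PtildeVR Q V ξ t ≤ PtildeR Q ξ t := by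
    intro ξ t ht
    apply csSup_le_csSup (hbddD ξ t)
    · exact ⟨|evalRR Q (ξ + 0)|, 0, V.zero_mem, by simpa using ht, rfl⟩
    · rintro r ⟨η, -, hη, rfl⟩
      exact ⟨η, Submodule.mem_top, hη, rfl⟩
  set F : ℝ → EuclideanSpace ℝ (Fin d) → ℝ := fun t ξ => PtildeVR Q V ξ t / PtildeR Q ξ t with hF
  have hF0 : ∀ (t : ℝ) (ξ : EuclideanSpace ℝ (Fin d)), 0 ≤ F t ξ := fun t ξ => div_nonneg (hnonneg _ _ _) (hnonneg _ _ _)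
  have hF1 : ∀ (t : ℝ) (ξ : EuclideanSpace ℝ (Fin d)), 0 ≤ t → F t ξ ≤ 1 := by
    intro t ξ ht
    rcases eq_or_lt_of_le (hnonneg ⊤ ξ t) with h | h
    · simp only [hF, PtildeR, ← h, div_zero]; norm_num
    · exact (div_le_one h).mpr (hNle ξ t ht)
  haveI : Nontrivial (EuclideanSpace ℝ (Fin d)) := by
    refine ⟨ed, 0, fun h => one_ne_zero (α := ℝ) ?_⟩
    have h1 : ed id1 = 1 := by rw [hed]; simp [hid1]
    rw [h] at h1; simpa using h1.symm
  -- liminf lower bound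
  have hliminf_ge : ∀ t : ℝ, 0 ≤ t → 0 ≤ liminf (F t) (Bornology.cobounded (EuclideanSpace ℝ (Fin d))) := by
    intro t ht
    exact le_liminf_of_le (isCoboundedUnder_ge_of_le _ fun ξ => hF1 t ξ ht)
      (Eventually.of_forall fun ξ => hF0 t ξ)
  -- key: for t = 2 the liminf is ≤ ε for every ε > 0
  have hfreq : ∀ ε : ℝ, 0 < ε → ∃ᶠ ξ in Bornology.cobounded (EuclideanSpace ℝ (Fin d)), F 2 ξ ≤ ε := by
    intro ε hε
    rw [(Metric.hasBasis_cobounded_compl_closedBall (0 : EuclideanSpace ℝ (Fin d))).frequently_iff]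
    intro C _
    set R : ℝ := max (|C| + 1) (4 / ε) with hRdef
    have hR0 : 0 < R := lt_of_lt_of_le (by positivity) (le_max_left _ _)
    have hRε : 4 / ε ≤ R := le_max_right _ _
    set ξR : EuclideanSpace ℝ (Fin d) := R • EuclideanSpace.single i0 (1:ℝ) + R • EuclideanSpace.single i1 (1:ℝ) with hξR
    have hξRapp : ∀ j, ξR j = (if j = i0 then R else 0) + (if j = i1 then R else 0) := by
      intro j
      simp [hξR, EuclideanSpace.single_apply, mul_ite]
    refine ⟨ξR, ?_, ?_⟩
    · -- outside closed ball C
      simp only [Set.mem_compl_iff, Metric.mem_closedBall, dist_zero_right, not_le]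
      have : R ≤ ‖ξR‖ := by
        rw [EuclideanSpace.norm_eq]
        rw [show R = Real.sqrt (R ^ 2) from (Real.sqrt_sq hR0.le).symm]
        apply Real.sqrt_le_sqrt
        calc R ^ 2 = ‖ξR i0‖ ^ 2 := by rw [hξRapp]; simp [h10.symm]
          _ ≤ ∑ j, ‖ξR j‖ ^ 2 := Finset.single_le_sum (f := fun j => ‖ξR j‖ ^ 2)
              (fun j _ => by positivity) (Finset.mem_univ i0)
      calc C ≤ |C| := le_abs_self C
        _ < R := lt_of_lt_of_le (by linarith [le_max_left (|C|+1) (4/ε)]) le_rfl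
        _ ≤ ‖ξR‖ := this
    · -- F 2 ξR ≤ ε
      have hed' : ∀ j, ed j = if j = id1 then (1:ℝ) else 0 := by
        intro j
        rw [hed j]
        congr 1
        simp [hid1, Fin.ext_iff]
      have hedn : ‖ed‖ = 1 := by
        have : ed = EuclideanSpace.single id1 (1:ℝ) := by
          ext j
          rw [hed' j, EuclideanSpace.single_apply]
        rw [this, EuclideanSpace.norm_single, norm_one]
      -- the numerator is at most 4
      have hnum : PtildeVR Q V ξR 2 ≤ 4 := by
        apply Real.sSup_le _ (by norm_num)
        rintro r ⟨η, hηV, hη, rfl⟩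
        rw [hV, Submodule.mem_span_singleton] at hηV
        obtain ⟨s, rfl⟩ := hηV
        have hs2 : |s| ≤ 2 := by
          rwa [norm_smul, hedn, mul_one, Real.norm_eq_abs] at hη
        have hval : evalRR Q (ξR + s • ed) = -s ^ 2 := by
          rw [heval]
          have hC : ∀ j, (ξR + s • ed) j = ξR j + s * ed j := fun j => rfl
          have hsum : ∑ j ∈ Finset.univ.erase i0, (ξR + s • ed) j ^ 2 = R ^ 2 + s ^ 2 := by
            apply sum_sq_two_supp i0 i1 id1 h1d h10 hd0
            intro j hj
            rw [hC, hξRapp, hed' j, if_neg hj, mul_ite]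
            ring_nf
          rw [hsum, hC, hξRapp, hed' i0, if_pos rfl, if_neg h10.symm, if_neg hd0.symm]
          ring
        rw [hval]
        calc |(-s ^ 2)| = |s| ^ 2 := by rw [abs_neg, abs_pow]
          _ ≤ 2 ^ 2 := pow_le_pow_left₀ (abs_nonneg s) hs2 2
          _ = 4 := by norm_num
      -- the denominator is at least 4R + 4
      have hden : 4 * R + 4 ≤ PtildeR Q ξR 2 := by
        have hval : evalRR Q (ξR + (2:ℝ) • EuclideanSpace.single i0 (1:ℝ)) = 4 * R + 4 := by
          rw [heval]
          have hC : ∀ j, (ξR + (2:ℝ) • EuclideanSpace.single i0 (1:ℝ)) j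
              = ξR j + 2 * (EuclideanSpace.single i0 (1:ℝ) j) := fun j => rfl
          have hsum : ∑ j ∈ Finset.univ.erase i0,
              (ξR + (2:ℝ) • EuclideanSpace.single i0 (1:ℝ)) j ^ 2 = R ^ 2 + 0 ^ 2 := by
            apply sum_sq_two_supp i0 i1 id1 h1d h10 hd0
            intro j hj
            rw [hC, hξRapp, EuclideanSpace.single_apply, if_neg hj, if_neg hj]
            simp
          rw [hsum, hC, hξRapp, EuclideanSpace.single_apply, if_pos rfl, if_pos rfl,
            if_neg h10.symm]
          ring
        have hη0 : ‖(2:ℝ) • EuclideanSpace.single i0 (1:ℝ)‖ ≤ (2:ℝ) := by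
          rw [norm_smul, EuclideanSpace.norm_single, norm_one, mul_one, Real.norm_eq_abs]
          norm_num
        have := hmemD ξR 2 _ hη0
        rw [hval, abs_of_nonneg (by linarith)] at this
        exact this
      have hdenpos : 0 < PtildeR Q ξR 2 := by linarith
      rw [hF]
      rw [div_le_iff₀ hdenpos]
      have h4 : 4 ≤ ε * R := by
        rw [div_le_iff₀ hε] at hRε
        linarith [hRε]
      calc PtildeVR Q V ξR 2 ≤ 4 := hnum
        _ ≤ ε * (4 * R + 4) := by nlinarith
        _ ≤ ε * PtildeR Q ξR 2 := by
            apply mul_le_mul_of_nonneg_left hden hε.le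
  -- liminf at t = 2 equals 0
  have hliminf2 : liminf (F 2) (Bornology.cobounded (EuclideanSpace ℝ (Fin d))) = 0 := by
    refine le_antisymm ?_ (hliminf_ge 2 (by norm_num))
    apply le_of_forall_pos_le_add
    intro ε hε
    have := liminf_le_of_frequently_le (hfreq ε hε)
      (isBoundedUnder_of ⟨0, fun ξ => hF0 2 ξ⟩)
    linarith
  -- conclude
  have hset : sigmaR Q V = sInf {r : ℝ | ∃ t > (1:ℝ),
      r = liminf (F t) (Bornology.cobounded (EuclideanSpace ℝ (Fin d)))} := rfl
  rw [hset]
  have h0mem : (0:ℝ) ∈ {r : ℝ | ∃ t > (1:ℝ),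
      r = liminf (F t) (Bornology.cobounded (EuclideanSpace ℝ (Fin d)))} :=
    ⟨2, by norm_num, hliminf2.symm⟩
  have hlb : ∀ r ∈ {r : ℝ | ∃ t > (1:ℝ),
      r = liminf (F t) (Bornology.cobounded (EuclideanSpace ℝ (Fin d)))}, (0:ℝ) ≤ r := by
    rintro r ⟨t, ht, rfl⟩
    exact hliminf_ge t (by linarith)
  exact le_antisymm (csInf_le ⟨0, fun r hr => hlb r hr⟩ h0mem) (le_csInf ⟨0, h0mem⟩ hlb)
end
end

section
/- Let d ≥ 1, let Q be a nonzero homogeneous polynomial of degree m ≥ 1 in d variables with complex coefficients, let y ∈ ℝ^d with σ_Q(y) = 0, and let R be a polynomial in d variables with complex coefficients of total degree at most 4m − 1. Set P := Q⁴ + R. Then σ⁰_P(y) = 0. -/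
open MvPolynomial Filter Finset

noncomputable section

namespace Aux

variable {d : ℕ}

lemma abs_coord_le (x : EuclideanSpace ℝ (Fin d)) (i : Fin d) : |x i| ≤ ‖x‖ := by
  rw [EuclideanSpace.norm_eq]
  have : |x i| = Real.sqrt (‖x i‖ ^ 2) := by
    rw [Real.sqrt_sq_eq_abs, Real.norm_eq_abs, abs_abs]
  rw [this]
  exact Real.sqrt_le_sqrt (Finset.single_le_sum (f := fun j => ‖x j‖ ^ 2)
    (fun j _ => sq_nonneg _) (Finset.mem_univ i))

/-- sum of absolute values of coefficients -/
def Bc (P : MvPolynomial (Fin d) ℂ) : ℝ := ∑ s ∈ P.support, ‖P.coeff s‖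

lemma Bc_nonneg (P : MvPolynomial (Fin d) ℂ) : 0 ≤ Bc P :=
  Finset.sum_nonneg fun _ _ => (norm_nonneg _)

lemma abs_evalR_le (P : MvPolynomial (Fin d) ℂ) (x : EuclideanSpace ℝ (Fin d)) :
    ‖evalR P x‖ ≤ Bc P * (1 + ‖x‖) ^ P.totalDegree := by
  have hx1 : (1:ℝ) ≤ 1 + ‖x‖ := by linarith [norm_nonneg x]
  rw [evalR, eval_eq, Bc, Finset.sum_mul]
  refine (norm_sum_le _ _).trans (Finset.sum_le_sum fun s hs => ?_)
  rw [norm_mul]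
  refine mul_le_mul_of_nonneg_left ?_ (norm_nonneg _)
  calc ‖∏ i ∈ s.support, ((x i : ℂ)) ^ s i‖
      = ∏ i ∈ s.support, |x i| ^ s i := by
        rw [norm_prod]; exact Finset.prod_congr rfl fun i _ => by
          rw [norm_pow, Complex.norm_real, Real.norm_eq_abs]
    _ ≤ ∏ i ∈ s.support, (1 + ‖x‖) ^ s i := by
        refine Finset.prod_le_prod (fun i _ => by positivity) (fun i _ => ?_)
        exact pow_le_pow_left₀ (abs_nonneg _) ((abs_coord_le x i).trans (by linarith)) _
    _ = (1 + ‖x‖) ^ (∑ i ∈ s.support, s i) := Finset.prod_pow_eq_pow_sum _ _ _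
    _ ≤ (1 + ‖x‖) ^ P.totalDegree := by
        apply pow_le_pow_right₀ hx1
        simpa [Finsupp.sum] using MvPolynomial.le_totalDegree (s := s) hs

lemma eval_mul_homog {n : ℕ} {Q : MvPolynomial (Fin d) ℂ} (h : Q.IsHomogeneous n)
    (c : ℂ) (x : Fin d → ℂ) :
    eval (fun i => c * x i) Q = c ^ n * eval x Q := by
  rw [eval_eq, eval_eq, Finset.mul_sum]
  refine Finset.sum_congr rfl fun s hs => ?_
  have hdeg : ∑ i ∈ s.support, s i = n := by
    have h1 := h (MvPolynomial.mem_support_iff.mp hs)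
    have h2 : Finsupp.degree s = Finsupp.weight 1 s := by rw [Finsupp.degree_eq_weight_one]; rfl
    rw [Finsupp.degree_apply] at h2
    simpa [Finsupp.sum] using h2.trans h1
  have : ∀ i ∈ s.support, (c * x i) ^ s i = c ^ s i * x i ^ s i := fun i _ => mul_pow _ _ _
  rw [Finset.prod_congr rfl this, Finset.prod_mul_distrib, Finset.prod_pow_eq_pow_sum, hdeg]
  ring


/-- The set whose sup is `PtildeV`. -/
lemma PtildeV_eq (P : MvPolynomial (Fin d) ℂ) (V : Submodule ℝ (EuclideanSpace ℝ (Fin d)))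
    (ξ : EuclideanSpace ℝ (Fin d)) (t : ℝ) :
    PtildeV P V ξ t
      = sSup {r : ℝ | ∃ η ∈ V, ‖η‖ ≤ t ∧ r = ‖evalR P (ξ + η)‖} := rfl

lemma mem_set_nonneg {P : MvPolynomial (Fin d) ℂ} {V : Submodule ℝ (EuclideanSpace ℝ (Fin d))}
    {ξ : EuclideanSpace ℝ (Fin d)} {t : ℝ} {r : ℝ}
    (hr : r ∈ {r : ℝ | ∃ η ∈ V, ‖η‖ ≤ t ∧ r = ‖evalR P (ξ + η)‖}) : 0 ≤ r := by
  obtain ⟨η, -, -, rfl⟩ := hr; exact norm_nonneg _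

lemma PtildeV_nonneg (P : MvPolynomial (Fin d) ℂ) (V : Submodule ℝ (EuclideanSpace ℝ (Fin d)))
    (ξ : EuclideanSpace ℝ (Fin d)) (t : ℝ) : 0 ≤ PtildeV P V ξ t :=
  Real.sSup_nonneg fun _ hr => mem_set_nonneg hr

lemma bddAbove_set (P : MvPolynomial (Fin d) ℂ) (V : Submodule ℝ (EuclideanSpace ℝ (Fin d)))
    (ξ : EuclideanSpace ℝ (Fin d)) {t : ℝ} (ht : 0 ≤ t) :
    BddAbove {r : ℝ | ∃ η ∈ V, ‖η‖ ≤ t ∧ r = ‖evalR P (ξ + η)‖} := by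
  refine ⟨Bc P * (1 + ‖ξ‖ + t) ^ P.totalDegree, fun r hr => ?_⟩
  obtain ⟨η, -, hη, rfl⟩ := hr
  refine (abs_evalR_le P (ξ + η)).trans ?_
  have h1 : (1:ℝ) + ‖ξ + η‖ ≤ 1 + ‖ξ‖ + t := by
    have := norm_add_le ξ η; linarith
  have h0 : (0:ℝ) ≤ 1 + ‖ξ + η‖ := by positivity
  exact mul_le_mul_of_nonneg_left (pow_le_pow_left₀ h0 h1 _) (Bc_nonneg P)

lemma le_PtildeV {P : MvPolynomial (Fin d) ℂ} {V : Submodule ℝ (EuclideanSpace ℝ (Fin d))}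
    {ξ η : EuclideanSpace ℝ (Fin d)} {t : ℝ} (ht : 0 ≤ t) (hη : η ∈ V) (hn : ‖η‖ ≤ t) :
    ‖evalR P (ξ + η)‖ ≤ PtildeV P V ξ t :=
  le_csSup (bddAbove_set P V ξ ht) ⟨η, hη, hn, rfl⟩

lemma PtildeV_le {P : MvPolynomial (Fin d) ℂ} {V : Submodule ℝ (EuclideanSpace ℝ (Fin d))}
    {ξ : EuclideanSpace ℝ (Fin d)} {t c : ℝ} (hc : 0 ≤ c)
    (h : ∀ η ∈ V, ‖η‖ ≤ t → ‖evalR P (ξ + η)‖ ≤ c) :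
    PtildeV P V ξ t ≤ c := by
  refine Real.sSup_le (fun r hr => ?_) hc
  obtain ⟨η, h1, h2, rfl⟩ := hr; exact h η h1 h2

lemma PtildeV_le_Ptilde (P : MvPolynomial (Fin d) ℂ) (V : Submodule ℝ (EuclideanSpace ℝ (Fin d)))
    (ξ : EuclideanSpace ℝ (Fin d)) {t : ℝ} (ht : 0 ≤ t) :
    PtildeV P V ξ t ≤ Ptilde P ξ t := by
  refine PtildeV_le (PtildeV_nonneg P ⊤ ξ t) fun η _ hn => le_PtildeV ht trivial hn

lemma ratio_mem_Icc (P : MvPolynomial (Fin d) ℂ) (V : Submodule ℝ (EuclideanSpace ℝ (Fin d)))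
    (ξ : EuclideanSpace ℝ (Fin d)) {t : ℝ} (ht : 0 ≤ t) :
    PtildeV P V ξ t / Ptilde P ξ t ∈ Set.Icc (0:ℝ) 1 := by
  constructor
  · exact div_nonneg (PtildeV_nonneg _ _ _ _) (PtildeV_nonneg _ _ _ _)
  · rcases eq_or_lt_of_le (PtildeV_nonneg P ⊤ ξ t) with h | h
    · rw [Ptilde, ← h, div_zero]; exact zero_le_one
    · rw [Ptilde] at *
      rw [div_le_one h]; exact PtildeV_le_Ptilde P V ξ ht

lemma evalR_smul {n : ℕ} {Q : MvPolynomial (Fin d) ℂ} (h : Q.IsHomogeneous n)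
    (c : ℝ) (x : EuclideanSpace ℝ (Fin d)) :
    evalR Q (c • x) = (c : ℂ) ^ n * evalR Q x := by
  have hfun : (fun i => (((c • x : EuclideanSpace ℝ (Fin d)) i : ℝ) : ℂ))
      = fun i => (c : ℂ) * ((x i : ℝ) : ℂ) := by
    funext i
    simp [PiLp.smul_apply, smul_eq_mul]
  rw [evalR, hfun, eval_mul_homog h, evalR]

lemma abs_evalR_smul {n : ℕ} {Q : MvPolynomial (Fin d) ℂ} (h : Q.IsHomogeneous n)
    {c : ℝ} (hc : 0 ≤ c) (x : EuclideanSpace ℝ (Fin d)) :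
    ‖evalR Q (c • x)‖ = c ^ n * ‖evalR Q x‖ := by
  rw [evalR_smul h, norm_mul, norm_pow, Complex.norm_real, Real.norm_eq_abs, abs_of_nonneg hc]

lemma PtildeV_smul_le {n : ℕ} {Q : MvPolynomial (Fin d) ℂ} (h : Q.IsHomogeneous n)
    (V : Submodule ℝ (EuclideanSpace ℝ (Fin d))) (ξ : EuclideanSpace ℝ (Fin d))
    {t lam : ℝ} (ht : 0 ≤ t) (hl : 0 < lam) :
    PtildeV Q V (lam • ξ) (lam * t) ≤ lam ^ n * PtildeV Q V ξ t := by
  refine PtildeV_le (mul_nonneg (pow_nonneg hl.le n) (PtildeV_nonneg Q V ξ t)) fun η hη hn => ?_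
  have hη' : lam⁻¹ • η ∈ V := V.smul_mem _ hη
  have hn' : ‖lam⁻¹ • η‖ ≤ t := by
    rw [norm_smul, Real.norm_eq_abs, abs_inv, abs_of_pos hl]
    rw [inv_mul_le_iff₀ hl]; exact hn
  have key : lam • ξ + η = lam • (ξ + lam⁻¹ • η) := by
    rw [smul_add, smul_inv_smul₀ (ne_of_gt hl)]
  rw [key, abs_evalR_smul h hl.le]
  exact mul_le_mul_of_nonneg_left (le_PtildeV ht hη' hn') (by positivity)

lemma analyticOnNhd_evalR (P : MvPolynomial (Fin d) ℂ) :
    AnalyticOnNhd ℝ (fun x : EuclideanSpace ℝ (Fin d) => evalR P x) Set.univ := by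
  induction P using MvPolynomial.induction_on with
  | C a =>
      have : (fun x : EuclideanSpace ℝ (Fin d) => evalR (C a) x) = fun _ => a := by
        funext x; simp [evalR]
      rw [this]; exact analyticOnNhd_const
  | add p q hp hq =>
      have : (fun x => evalR (p + q) x) = fun x => evalR p x + evalR q x := by
        funext x; simp [evalR]
      rw [this]; exact hp.add hq
  | mul_X p i hp =>
      have : (fun x => evalR (p * X i) x)
          = fun x => evalR p x * ((Complex.ofRealCLM.comp (EuclideanSpace.proj i)) x) := by
        funext x; simp [evalR]
      rw [this]
      exact hp.mul ((Complex.ofRealCLM.comp (EuclideanSpace.proj i)).analyticOnNhd _)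

lemma evalR_eq_zero_all {Q : MvPolynomial (Fin d) ℂ}
    (h : ∀ x : EuclideanSpace ℝ (Fin d), evalR Q x = 0) : Q = 0 := by
  have h' : ∀ x : Fin d → ℝ, eval (fun i => (x i : ℂ)) Q = 0 := by
    intro x
    have := h ((WithLp.equiv 2 _).symm x)
    simpa [evalR, WithLp.equiv_symm_apply] using this
  set A : MvPolynomial (Fin d) ℝ := ∑ s ∈ Q.support, monomial s ((Q.coeff s).re) with hA
  set B : MvPolynomial (Fin d) ℝ := ∑ s ∈ Q.support, monomial s ((Q.coeff s).im) with hB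
  have prodcast : ∀ (x : Fin d → ℝ) (s : Fin d →₀ ℕ),
      ∏ i ∈ s.support, ((x i : ℂ)) ^ s i = ((∏ i ∈ s.support, x i ^ s i : ℝ) : ℂ) := by
    intro x s; push_cast; rfl
  have evalA : ∀ x : Fin d → ℝ, eval x A = (eval (fun i => (x i : ℂ)) Q).re := by
    intro x
    rw [hA, map_sum, eval_eq (fun i => (x i : ℂ)) Q, Complex.re_sum]
    refine Finset.sum_congr rfl fun s hs => ?_
    rw [eval_monomial, Finsupp.prod, prodcast x s,
      Complex.mul_re, Complex.ofReal_re, Complex.ofReal_im, mul_zero, sub_zero]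
  have evalB : ∀ x : Fin d → ℝ, eval x B = (eval (fun i => (x i : ℂ)) Q).im := by
    intro x
    rw [hB, map_sum, eval_eq (fun i => (x i : ℂ)) Q, Complex.im_sum]
    refine Finset.sum_congr rfl fun s hs => ?_
    rw [eval_monomial, Finsupp.prod, prodcast x s,
      Complex.mul_im, Complex.ofReal_re, Complex.ofReal_im, mul_zero, zero_add]
  have hA0 : A = 0 := MvPolynomial.funext fun x => by
    rw [evalA x, h' x]; simp
  have hB0 : B = 0 := MvPolynomial.funext fun x => by
    rw [evalB x, h' x]; simp
  have coeffA : ∀ s, A.coeff s = (Q.coeff s).re := by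
    intro s
    rw [hA, MvPolynomial.coeff_sum]
    simp only [coeff_monomial]
    rw [Finset.sum_ite_eq' Q.support s fun s' => (Q.coeff s').re]
    by_cases hs : s ∈ Q.support
    · rw [if_pos hs]
    · rw [if_neg hs]
      rw [MvPolynomial.notMem_support_iff] at hs
      rw [hs, Complex.zero_re]
  have coeffB : ∀ s, B.coeff s = (Q.coeff s).im := by
    intro s
    rw [hB, MvPolynomial.coeff_sum]
    simp only [coeff_monomial]
    rw [Finset.sum_ite_eq' Q.support s fun s' => (Q.coeff s').im]
    by_cases hs : s ∈ Q.support
    · rw [if_pos hs]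
    · rw [if_neg hs]
      rw [MvPolynomial.notMem_support_iff] at hs
      rw [hs, Complex.zero_im]
  ext s
  rw [MvPolynomial.coeff_zero]
  apply Complex.ext
  · rw [← coeffA s, hA0, MvPolynomial.coeff_zero, Complex.zero_re]
  · rw [← coeffB s, hB0, MvPolynomial.coeff_zero, Complex.zero_im]

lemma exists_evalR_ne_zero {Q : MvPolynomial (Fin d) ℂ} (hQ0 : Q ≠ 0)
    (ξ : EuclideanSpace ℝ (Fin d)) {t : ℝ} (ht : 0 < t) :
    ∃ η : EuclideanSpace ℝ (Fin d), ‖η‖ ≤ t ∧ evalR Q (ξ + η) ≠ 0 := by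
  by_contra hcon
  push_neg at hcon
  have hball : ∀ z ∈ Metric.closedBall ξ t, evalR Q z = 0 := by
    intro z hz
    have h1 : ‖z - ξ‖ ≤ t := by
      rw [← dist_eq_norm]; exact Metric.mem_closedBall.mp hz
    have := hcon (z - ξ) h1
    rwa [add_sub_cancel] at this
  have hev : (fun x => evalR Q x) =ᶠ[nhds ξ] 0 := by
    filter_upwards [Metric.closedBall_mem_nhds ξ ht] with z hz using hball z hz
  have hzero := (analyticOnNhd_evalR Q).eqOn_zero_of_preconnected_of_eventuallyEq_zero
    isPreconnected_univ (Set.mem_univ ξ) hev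
  exact hQ0 (evalR_eq_zero_all fun x => hzero (Set.mem_univ x))

lemma Ptilde_pos {Q : MvPolynomial (Fin d) ℂ} (hQ0 : Q ≠ 0)
    (ξ : EuclideanSpace ℝ (Fin d)) {t : ℝ} (ht : 0 < t) :
    0 < Ptilde Q ξ t := by
  obtain ⟨η, hn, hne⟩ := exists_evalR_ne_zero hQ0 ξ ht
  have h1 : 0 < ‖evalR Q (ξ + η)‖ := by
    simpa [norm_pos_iff] using hne
  exact h1.trans_le (le_PtildeV ht.le trivial hn)

lemma exists_ratio_small (hd : 1 ≤ d) {Q : MvPolynomial (Fin d) ℂ} (hQ0 : Q ≠ 0)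
    {V : Submodule ℝ (EuclideanSpace ℝ (Fin d))}
    (hy : sigma Q V = 0) {ε : ℝ} (hε : 0 < ε) :
    ∃ t > (1:ℝ), ∃ ξ, PtildeV Q V ξ t < ε * Ptilde Q ξ t := by
  haveI : Nonempty (Fin d) := ⟨⟨0, hd⟩⟩
  haveI : Nontrivial (EuclideanSpace ℝ (Fin d)) := inferInstance
  set SL := {r : ℝ | ∃ t > (1:ℝ), r = liminf (fun ξ => PtildeV Q V ξ t / Ptilde Q ξ t)
    (Bornology.cobounded (EuclideanSpace ℝ (Fin d)))} with hSL
  have hub : ∀ t : ℝ, 1 < t → ∀ ξ, PtildeV Q V ξ t / Ptilde Q ξ t ∈ Set.Icc (0:ℝ) 1 :=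
    fun t ht ξ => ratio_mem_Icc Q V ξ (by linarith)
  have hbound : ∀ t : ℝ, 1 < t → IsCoboundedUnder (· ≥ ·)
      (Bornology.cobounded (EuclideanSpace ℝ (Fin d)))
      (fun ξ => PtildeV Q V ξ t / Ptilde Q ξ t) := by
    intro t ht
    refine Filter.IsBoundedUnder.isCoboundedUnder_ge ⟨1, ?_⟩
    exact Filter.eventually_map.mpr (Filter.Eventually.of_forall fun ξ => (hub t ht ξ).2)
  have hnonneg : ∀ r ∈ SL, 0 ≤ r := by
    rintro r ⟨t, ht, rfl⟩
    exact Filter.le_liminf_of_le (hbound t ht)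
      (Filter.Eventually.of_forall fun ξ => (hub t ht ξ).1)
  have hne : SL.Nonempty := ⟨_, 2, one_lt_two, rfl⟩
  have hlt : ∃ r ∈ SL, r < ε := by
    by_contra hcon
    push_neg at hcon
    have : ε ≤ sInf SL := le_csInf hne hcon
    rw [← sigma, hy] at this
    linarith
  obtain ⟨r, ⟨t, ht, rfl⟩, hr⟩ := hlt
  refine ⟨t, ht, ?_⟩
  by_contra hcon
  push_neg at hcon
  have : ε ≤ liminf (fun ξ => PtildeV Q V ξ t / Ptilde Q ξ t)
      (Bornology.cobounded (EuclideanSpace ℝ (Fin d))) := by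
    refine Filter.le_liminf_of_le (hbound t ht) (Filter.Eventually.of_forall fun ξ => ?_)
    have h1 := hcon ξ
    have h2 : 0 < Ptilde Q ξ t := Ptilde_pos hQ0 ξ (by linarith)
    rw [le_div_iff₀ h2]
    linarith
  linarith

end Aux

set_option maxHeartbeats 1000000 in
/-- If `Q` is a nonzero homogeneous polynomial of degree `m ≥ 1` with `σ_Q(y) = 0`, and
`R` has total degree at most `4m - 1`, then `P := Q⁴ + R` satisfies `σ⁰_P(y) = 0`. -/
theorem statement11 {d m : ℕ} (hd : 1 ≤ d) (hm : 1 ≤ m)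
    (Q : MvPolynomial (Fin d) ℂ) (hQ0 : Q ≠ 0) (hQ : Q.IsHomogeneous m)
    (y : EuclideanSpace ℝ (Fin d)) (hy : sigma Q (Submodule.span ℝ {y}) = 0)
    (R : MvPolynomial (Fin d) ℂ) (hR : R.totalDegree ≤ 4 * m - 1)
    (P : MvPolynomial (Fin d) ℂ) (hP : P = Q ^ 4 + R) :
    sigma0 P (Submodule.span ℝ {y}) = 0 := by
  classical
  set V := Submodule.span ℝ {y} with hV
  set S0 := {r : ℝ | ∃ t > (1:ℝ), ∃ ξ, r = PtildeV P V ξ t / Ptilde P ξ t} with hS0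
  have hS0ne : S0.Nonempty := ⟨_, 2, one_lt_two, 0, rfl⟩
  have hS0nonneg : ∀ r ∈ S0, 0 ≤ r := by
    rintro r ⟨t, ht, ξ, rfl⟩
    exact div_nonneg (Aux.PtildeV_nonneg _ _ _ _) (Aux.PtildeV_nonneg _ _ _ _)
  have hPx : ∀ x, evalR P x = (evalR Q x) ^ 4 + evalR R x := by
    intro x; rw [hP]; simp [evalR]
  -- key claim : small elements exist
  have claim : ∀ δ : ℝ, 0 < δ → ∃ r ∈ S0, r < δ := by
    intro δ hδ
    set ε := min 1 (δ / 128) with hεdef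
    have hε : 0 < ε := lt_min one_pos (by linarith)
    have hε1 : ε ≤ 1 := min_le_left _ _
    have hε2 : ε ≤ δ / 128 := min_le_right _ _
    obtain ⟨t, ht1, ξ, hsmall⟩ := Aux.exists_ratio_small hd hQ0 hy hε
    have ht0 : (0:ℝ) < t := by linarith
    obtain ⟨A, hAdef⟩ : ∃ A : ℝ, A = Ptilde Q ξ t := ⟨_, rfl⟩
    rw [← hAdef] at hsmall
    have hA : 0 < A := hAdef ▸ Aux.Ptilde_pos hQ0 ξ ht0
    obtain ⟨C', hC'def⟩ : ∃ c : ℝ, c = Aux.Bc R * (1 + ‖ξ‖ + t) ^ (4 * m - 1) := ⟨_, rfl⟩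
    have hK1 : (1:ℝ) ≤ 1 + ‖ξ‖ + t := by
      have := norm_nonneg ξ; linarith
    have hC' : 0 ≤ C' := hC'def ▸ mul_nonneg (Aux.Bc_nonneg R) (by positivity)
    obtain ⟨lam, hlamdef⟩ : ∃ l : ℝ, l = 1 + 32 * C' / A ^ 4 + C' / (ε ^ 4 * A ^ 4) := ⟨_, rfl⟩
    have hlam1 : (1:ℝ) ≤ lam := by
      have h1 : 0 ≤ 32 * C' / A ^ 4 := by positivity
      have h2 : 0 ≤ C' / (ε ^ 4 * A ^ 4) := by positivity
      rw [hlamdef]; linarith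
    have hlam0 : (0:ℝ) < lam := by linarith
    have hlam2 : C' ≤ lam * (ε ^ 4 * A ^ 4) := by
      have h3 : 0 < ε ^ 4 * A ^ 4 := by positivity
      have h4 : C' / (ε ^ 4 * A ^ 4) ≤ lam := by
        have h1 : 0 ≤ 32 * C' / A ^ 4 := by positivity
        rw [hlamdef]; linarith
      calc C' = C' / (ε ^ 4 * A ^ 4) * (ε ^ 4 * A ^ 4) := by field_simp
        _ ≤ lam * (ε ^ 4 * A ^ 4) := by
            exact mul_le_mul_of_nonneg_right h4 h3.le
    have hlam3 : 32 * C' ≤ lam * A ^ 4 := by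
      have h3 : 0 < A ^ 4 := by positivity
      have h4 : 32 * C' / A ^ 4 ≤ lam := by
        have h2 : 0 ≤ C' / (ε ^ 4 * A ^ 4) := by positivity
        rw [hlamdef]; linarith
      calc 32 * C' = 32 * C' / A ^ 4 * A ^ 4 := by field_simp
        _ ≤ lam * A ^ 4 := mul_le_mul_of_nonneg_right h4 h3.le
    obtain ⟨ζ, hζdef⟩ : ∃ z : EuclideanSpace ℝ (Fin d), z = lam • ξ := ⟨_, rfl⟩
    obtain ⟨t', ht'def⟩ : ∃ s : ℝ, s = lam * t := ⟨_, rfl⟩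
    have ht' : 1 < t' := by rw [ht'def]; nlinarith
    have hpowsplit : lam ^ (4 * m) = lam ^ (4 * m - 1) * lam := by
      rw [← pow_succ]
      congr 1
      omega
    have hlampow : 0 < lam ^ (4 * m - 1) := by positivity
    -- bound on |R| on the ball
    have hRbound : ∀ η : EuclideanSpace ℝ (Fin d), ‖η‖ ≤ t' →
        ‖evalR R (ζ + η)‖ ≤ lam ^ (4 * m - 1) * C' := by
      intro η hn
      refine (Aux.abs_evalR_le R (ζ + η)).trans ?_
      have hx : 1 + ‖ζ + η‖ ≤ lam * (1 + ‖ξ‖ + t) := by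
        have h1 : ‖ζ + η‖ ≤ ‖ζ‖ + ‖η‖ := norm_add_le _ _
        have h2 : ‖ζ‖ = lam * ‖ξ‖ := by
          rw [hζdef, norm_smul, Real.norm_eq_abs, abs_of_pos hlam0]
        nlinarith [norm_nonneg ξ, norm_nonneg η, norm_nonneg (ζ + η)]
      have hx1 : (1:ℝ) ≤ 1 + ‖ζ + η‖ := by have := norm_nonneg (ζ + η); linarith
      calc Aux.Bc R * (1 + ‖ζ + η‖) ^ R.totalDegree
          ≤ Aux.Bc R * (1 + ‖ζ + η‖) ^ (4 * m - 1) :=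
            mul_le_mul_of_nonneg_left (pow_le_pow_right₀ hx1 hR) (Aux.Bc_nonneg R)
        _ ≤ Aux.Bc R * (lam * (1 + ‖ξ‖ + t)) ^ (4 * m - 1) :=
            mul_le_mul_of_nonneg_left (pow_le_pow_left₀ (by linarith) hx _) (Aux.Bc_nonneg R)
        _ = lam ^ (4 * m - 1) * C' := by rw [hC'def, mul_pow]; ring
    -- numerator bound
    have hQyζ : PtildeV Q V ζ t' ≤ lam ^ m * (ε * A) := by
      rw [hζdef, ht'def]
      refine (Aux.PtildeV_smul_le hQ V ξ ht0.le hlam0).trans ?_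
      exact mul_le_mul_of_nonneg_left hsmall.le (by positivity)
    have hNum : PtildeV P V ζ t' ≤ 2 * (lam ^ (4 * m) * (ε ^ 4 * A ^ 4)) := by
      refine Aux.PtildeV_le (by positivity) fun η hη hn => ?_
      have h1 : ‖evalR P (ζ + η)‖
          ≤ ‖evalR Q (ζ + η)‖ ^ 4 + ‖evalR R (ζ + η)‖ := by
        rw [hPx]
        refine (norm_add_le _ _).trans ?_
        rw [norm_pow]
      have h2 : ‖evalR Q (ζ + η)‖ ≤ lam ^ m * (ε * A) :=
        (Aux.le_PtildeV (by linarith) hη hn).trans hQyζ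
      have h3 : ‖evalR Q (ζ + η)‖ ^ 4 ≤ lam ^ (4 * m) * (ε ^ 4 * A ^ 4) := by
        calc ‖evalR Q (ζ + η)‖ ^ 4 ≤ (lam ^ m * (ε * A)) ^ 4 :=
              pow_le_pow_left₀ (norm_nonneg _) h2 4
          _ = lam ^ (4 * m) * (ε ^ 4 * A ^ 4) := by
              rw [mul_pow, ← pow_mul, mul_pow]
              ring_nf
      have h4 := hRbound η hn
      have h5 : lam ^ (4 * m - 1) * C' ≤ lam ^ (4 * m) * (ε ^ 4 * A ^ 4) := by
        rw [hpowsplit]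
        calc lam ^ (4 * m - 1) * C' ≤ lam ^ (4 * m - 1) * (lam * (ε ^ 4 * A ^ 4)) :=
              mul_le_mul_of_nonneg_left hlam2 hlampow.le
          _ = lam ^ (4 * m - 1) * lam * (ε ^ 4 * A ^ 4) := by ring
      linarith
    -- denominator bound
    have hDen : lam ^ (4 * m) * (A ^ 4 / 32) ≤ Ptilde P ζ t' := by
      -- find a near-maximizer for Q on the big ball
      have hne2 : {r : ℝ | ∃ η ∈ (⊤ : Submodule ℝ (EuclideanSpace ℝ (Fin d))),
          ‖η‖ ≤ t ∧ r = ‖evalR Q (ξ + η)‖}.Nonempty :=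
        ⟨_, 0, trivial, by simpa using ht0.le, rfl⟩
      have hlt2 : A / 2 < sSup {r : ℝ | ∃ η ∈ (⊤ : Submodule ℝ (EuclideanSpace ℝ (Fin d))),
          ‖η‖ ≤ t ∧ r = ‖evalR Q (ξ + η)‖} := by
        have he : Ptilde Q ξ t = sSup {r : ℝ | ∃ η ∈ (⊤ : Submodule ℝ (EuclideanSpace ℝ (Fin d))),
            ‖η‖ ≤ t ∧ r = ‖evalR Q (ξ + η)‖} := rfl
        rw [← he, ← hAdef]
        linarith
      obtain ⟨r, ⟨η₀, -, hn₀, rfl⟩, hr₀⟩ := exists_lt_of_lt_csSup hne2 hlt2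
      set η₁ := lam • η₀ with hη₁def
      have hn₁ : ‖η₁‖ ≤ t' := by
        rw [hη₁def, norm_smul, Real.norm_eq_abs, abs_of_pos hlam0, ht'def]
        exact mul_le_mul_of_nonneg_left hn₀ hlam0.le
      have hkey : ζ + η₁ = lam • (ξ + η₀) := by rw [hζdef, hη₁def, smul_add]
      have hQval : lam ^ m * (A / 2) ≤ ‖evalR Q (ζ + η₁)‖ := by
        rw [hkey, Aux.abs_evalR_smul hQ hlam0.le]
        exact mul_le_mul_of_nonneg_left hr₀.le (by positivity)
      have hQval4 : lam ^ (4 * m) * (A ^ 4 / 16) ≤ ‖evalR Q (ζ + η₁)‖ ^ 4 := by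
        calc lam ^ (4 * m) * (A ^ 4 / 16) = (lam ^ m * (A / 2)) ^ 4 := by
              rw [mul_pow, ← pow_mul]
              ring_nf
          _ ≤ ‖evalR Q (ζ + η₁)‖ ^ 4 :=
              pow_le_pow_left₀ (by positivity) hQval 4
      have hPval : ‖evalR Q (ζ + η₁)‖ ^ 4 - ‖evalR R (ζ + η₁)‖
          ≤ ‖evalR P (ζ + η₁)‖ := by
        have h6 : ‖(evalR Q (ζ + η₁)) ^ 4‖
            ≤ ‖evalR P (ζ + η₁)‖ + ‖evalR R (ζ + η₁)‖ := by
          have : (evalR Q (ζ + η₁)) ^ 4 = evalR P (ζ + η₁) - evalR R (ζ + η₁) := by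
            rw [hPx]; ring
          rw [this, sub_eq_add_neg]
          have htr := norm_add_le (evalR P (ζ + η₁)) (-evalR R (ζ + η₁))
          rwa [norm_neg] at htr
        rw [norm_pow] at h6
        linarith
      have h7 := hRbound η₁ hn₁
      have h8 : lam ^ (4 * m - 1) * C' ≤ lam ^ (4 * m) * (A ^ 4 / 32) := by
        rw [hpowsplit]
        calc lam ^ (4 * m - 1) * C' ≤ lam ^ (4 * m - 1) * (lam * A ^ 4 / 32) := by
              refine mul_le_mul_of_nonneg_left ?_ hlampow.le
              linarith
          _ = lam ^ (4 * m - 1) * lam * (A ^ 4 / 32) := by ring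
      have h9 : lam ^ (4 * m) * (A ^ 4 / 32) ≤ ‖evalR P (ζ + η₁)‖ := by
        have h10 : lam ^ (4 * m) * (A ^ 4 / 16) = lam ^ (4 * m) * (A ^ 4 / 32)
            + lam ^ (4 * m) * (A ^ 4 / 32) := by ring
        linarith
      exact h9.trans (Aux.le_PtildeV (by linarith) trivial hn₁)
    have hDpos : 0 < lam ^ (4 * m) * (A ^ 4 / 32) := by positivity
    refine ⟨_, ⟨t', ht', ζ, rfl⟩, ?_⟩
    have hPden : 0 < Ptilde P ζ t' := lt_of_lt_of_le hDpos hDen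
    calc PtildeV P V ζ t' / Ptilde P ζ t'
        ≤ 2 * (lam ^ (4 * m) * (ε ^ 4 * A ^ 4)) / (lam ^ (4 * m) * (A ^ 4 / 32)) :=
          div_le_div₀ (by positivity) hNum hDpos hDen
      _ = 64 * ε ^ 4 := by field_simp; ring
      _ ≤ 64 * ε := by
          have h3 : ε ^ 3 ≤ 1 := pow_le_one₀ hε.le hε1
          have : ε ^ 4 ≤ ε := by nlinarith [h3, hε.le]
          linarith
      _ < δ := by linarith
  -- conclude
  rw [sigma0, ← hS0]
  have hle : sInf S0 ≤ 0 := by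
    by_contra hcon
    push_neg at hcon
    obtain ⟨r, hr, hlt⟩ := claim _ hcon
    exact absurd (csInf_le ⟨0, fun x hx => hS0nonneg x hx⟩ hr) (not_le.mpr hlt)
  have hge : 0 ≤ sInf S0 := Real.sInf_nonneg hS0nonneg
  linarith
end
end
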